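/- arXiv:2007.12109 — 5 statements merged into one kernel-verified Lean document; each statement's English description precedes it below -/
import Mathlib

section
/- If two words X_1 and X_2 in the alphabet {α_1, α_1^{-1}, ..., α_k, α_k^{-1}} represent the same element of the free group F_k, then the minimum number of unmatched letters over all non-crossing matchings of X_1 (pairing letters with their inverses) equals the corresponding minimum for X_2. -/
set_option linter.unusedVariables false

open scoped BigOperators

abbrev Letter (k : ℕ) := Fin k × Bool

def Letter.bar {k : ℕ} (x : Letter k) : Letter k := (x.1, !x.2)

/-- `M` is an (incomplete) non-crossing matching of the word `X`,
pairing letters with their inverse letters. -/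
def IsNCMatching {k : ℕ} (X : List (Letter k)) (M : Finset (ℕ × ℕ)) : Prop :=
  (∀ p ∈ M, p.1 < p.2 ∧ p.2 < X.length ∧ X[p.1]? = (X[p.2]?).map Letter.bar) ∧
  (∀ p ∈ M, ∀ q ∈ M, p ≠ q → p.1 ≠ q.1 ∧ p.1 ≠ q.2 ∧ p.2 ≠ q.1 ∧ p.2 ≠ q.2) ∧
  (∀ p ∈ M, ∀ q ∈ M, ¬ (p.1 < q.1 ∧ q.1 < p.2 ∧ p.2 < q.2))

/-- minimal number of unmatched letters over all non-crossing matchings of `X`. -/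
noncomputable def ell {k : ℕ} (X : List (Letter k)) : ℕ :=
  sInf {m | ∃ M : Finset (ℕ × ℕ), IsNCMatching X M ∧ m = X.length - 2 * M.card}

/-- `L_k(n)`: the expected value of `ell` over uniformly random words of length `n`. -/
noncomputable def Lk (k n : ℕ) : ℝ :=
  (∑ w : Fin n → Letter k, (ell (List.ofFn w) : ℝ)) / (2 * k) ^ n

noncomputable def lambda (k : ℕ) : ℝ := ⨅ n : ℕ+, Lk k n / n

theorem test : True := trivial

section EllAux

lemma Letter.bar_bar {k : ℕ} (x : Letter k) : x.bar.bar = x := by simp [Letter.bar]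

lemma lt_of_get {k : ℕ} {X : List (Letter k)} {m : ℕ} {b : Letter k}
    (h : X[m]? = some b) : m < X.length := by
  by_contra hc
  rw [List.getElem?_eq_none (by omega)] at h
  cases h

lemma map_bar_eq {k : ℕ} {o : Option (Letter k)} {a : Letter k}
    (h : Option.map Letter.bar o = some a) : o = some (Letter.bar a) := by
  cases o with
  | none => simp at h
  | some b => simp at h ⊢; rw [← h, Letter.bar_bar]

lemma isNC_subset {k : ℕ} {X : List (Letter k)} {M M' : Finset (ℕ × ℕ)}
    (hsub : M' ⊆ M) (hM : IsNCMatching X M) : IsNCMatching X M' :=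
  ⟨fun p hp => hM.1 p (hsub hp), fun p hp q hq => hM.2.1 p (hsub hp) q (hsub hq),
   fun p hp q hq => hM.2.2 p (hsub hp) q (hsub hq)⟩

lemma isNC_insert_adj {k : ℕ} {X : List (Letter k)} {M : Finset (ℕ × ℕ)} {n : ℕ} {a : Letter k}
    (hM : IsNCMatching X M) (h1 : X[n]? = some a) (h2 : X[n+1]? = some (Letter.bar a))
    (hav : ∀ s ∈ M, s.1 ≠ n ∧ s.1 ≠ n+1 ∧ s.2 ≠ n ∧ s.2 ≠ n+1) :
    IsNCMatching X (insert (n, n+1) M) := by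
  refine ⟨?_, ?_, ?_⟩
  · intro u hu
    rcases Finset.mem_insert.mp hu with rfl | hu
    · exact ⟨by omega, lt_of_get h2, by rw [h1, h2]; simp [Letter.bar]⟩
    · exact hM.1 u hu
  · intro u hu v hv hne
    rcases Finset.mem_insert.mp hu with rfl | hu <;> rcases Finset.mem_insert.mp hv with rfl | hv
    · exact absurd rfl hne
    · have := hav v hv
      show n ≠ v.1 ∧ n ≠ v.2 ∧ n + 1 ≠ v.1 ∧ n + 1 ≠ v.2; omega
    · have := hav u hu
      show u.1 ≠ n ∧ u.1 ≠ n + 1 ∧ u.2 ≠ n ∧ u.2 ≠ n + 1; omega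
    · exact hM.2.1 u hu v hv hne
  · intro u hu v hv
    rcases Finset.mem_insert.mp hu with rfl | hu <;> rcases Finset.mem_insert.mp hv with rfl | hv
    · omega
    · show ¬ (n < v.1 ∧ v.1 < n + 1 ∧ n + 1 < v.2); omega
    · show ¬ (u.1 < n ∧ n < u.2 ∧ u.2 < n + 1); omega
    · exact hM.2.2 u hu v hv


lemma isNC_empty {k : ℕ} (X : List (Letter k)) : IsNCMatching X ∅ := by
  refine ⟨?_, ?_, ?_⟩ <;> simp

lemma ell_exists {k : ℕ} (X : List (Letter k)) :
    ∃ M, IsNCMatching X M ∧ ell X = X.length - 2 * M.card := by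
  have h := Nat.sInf_mem (s := {m | ∃ M : Finset (ℕ × ℕ), IsNCMatching X M ∧ m = X.length - 2 * M.card}) ⟨X.length, ∅, isNC_empty X, by simp⟩
  obtain ⟨M, hM, hm⟩ := h
  exact ⟨M, hM, hm⟩

lemma ell_le {k : ℕ} (X : List (Letter k)) (M : Finset (ℕ × ℕ)) (h : IsNCMatching X M) :
    ell X ≤ X.length - 2 * M.card := Nat.sInf_le ⟨M, h, rfl⟩

lemma get_shift {k : ℕ} (L₁ L₂ : List (Letter k)) (a : Letter k) (i : ℕ) :
    (L₁ ++ L₂)[i]? = (L₁ ++ a :: Letter.bar a :: L₂)[if i < L₁.length then i else i + 2]? := by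
  by_cases h : i < L₁.length
  · rw [if_pos h, List.getElem?_append_left h, List.getElem?_append_left h]
  · push_neg at h
    rw [if_neg (by omega), List.getElem?_append_right h,
      List.getElem?_append_right (by omega : L₁.length ≤ i + 2)]
    have e : i + 2 - L₁.length = (i - L₁.length) + 1 + 1 := by omega
    rw [e, List.getElem?_cons_succ, List.getElem?_cons_succ]

lemma len_long {k : ℕ} (L₁ L₂ : List (Letter k)) (a : Letter k) :
    (L₁ ++ a :: Letter.bar a :: L₂).length = (L₁ ++ L₂).length + 2 := by
  simp [List.length_append]; omega

lemma get_n {k : ℕ} (L₁ L₂ : List (Letter k)) (a : Letter k) :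
    (L₁ ++ a :: Letter.bar a :: L₂)[L₁.length]? = some a := by
  rw [List.getElem?_append_right (le_refl _)]; simp

lemma get_n1 {k : ℕ} (L₁ L₂ : List (Letter k)) (a : Letter k) :
    (L₁ ++ a :: Letter.bar a :: L₂)[L₁.length + 1]? = some (Letter.bar a) := by
  rw [List.getElem?_append_right (by omega)]
  have e : L₁.length + 1 - L₁.length = 1 := by omega
  rw [e]; simp

lemma lemA {k : ℕ} (L₁ L₂ : List (Letter k)) (a : Letter k) :
    ell (L₁ ++ a :: Letter.bar a :: L₂) ≤ ell (L₁ ++ L₂) := by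
  obtain ⟨M, hM, hm⟩ := ell_exists (L₁ ++ L₂)
  set n := L₁.length with hn
  set g : ℕ → ℕ := fun i => if i < n then i else i + 2 with hg
  have hgn : ∀ i, g i ≠ n ∧ g i ≠ n + 1 := by
    intro i; simp only [hg]; split <;> omega
  have hglt : ∀ x y, x < y ↔ g x < g y := by
    intro x y; simp only [hg]; split_ifs <;> omega
  have hginj : ∀ x y, g x = g y → x = y := by
    intro x y h; have h1 := hglt x y; have h2 := hglt y x; omega
  set M' : Finset (ℕ × ℕ) := insert (n, n+1) (M.image fun p => (g p.1, g p.2)) with hM'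
  have hmemM' : ∀ u ∈ M', u = (n, n+1) ∨ ∃ s ∈ M, u = (g s.1, g s.2) := by
    intro u hu
    rcases Finset.mem_insert.mp hu with h | h
    · exact Or.inl h
    · obtain ⟨s, hs, he⟩ := Finset.mem_image.mp h
      exact Or.inr ⟨s, hs, he.symm⟩
  have hNC : IsNCMatching (L₁ ++ a :: Letter.bar a :: L₂) M' := by
    refine ⟨?_, ?_, ?_⟩
    · intro u hu
      rcases hmemM' u hu with rfl | ⟨s, hs, rfl⟩
      · refine ⟨by omega, ?_, ?_⟩
        · rw [len_long]; simp only [List.length_append]; omega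
        · rw [get_n, get_n1]; simp [Letter.bar]
      · obtain ⟨h1, h2, h3⟩ := hM.1 s hs
        refine ⟨(hglt _ _).mp h1, ?_, ?_⟩
        · rw [len_long]
          have : g s.2 ≤ s.2 + 2 := by simp only [hg]; split <;> omega
          omega
        · show (L₁ ++ a :: Letter.bar a :: L₂)[g s.1]? = _
          have e1 := get_shift L₁ L₂ a s.1
          have e2 := get_shift L₁ L₂ a s.2
          simp only [← hn] at e1 e2
          rw [← e1, ← e2]; exact h3
    · intro u hu v hv hne
      rcases hmemM' u hu with rfl | ⟨s, hs, rfl⟩ <;> rcases hmemM' v hv with rfl | ⟨t, ht, rfl⟩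
      · exact absurd rfl hne
      · have h1 := (hgn t.1); have h2 := (hgn t.2)
        show n ≠ g t.1 ∧ n ≠ g t.2 ∧ n + 1 ≠ g t.1 ∧ n + 1 ≠ g t.2
        omega
      · have h1 := (hgn s.1); have h2 := (hgn s.2)
        show g s.1 ≠ n ∧ g s.1 ≠ n + 1 ∧ g s.2 ≠ n ∧ g s.2 ≠ n + 1
        omega
      · have hst : s ≠ t := fun h => hne (by rw [h])
        obtain ⟨d1, d2, d3, d4⟩ := hM.2.1 s hs t ht hst
        exact ⟨fun h => d1 (hginj _ _ h), fun h => d2 (hginj _ _ h),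
          fun h => d3 (hginj _ _ h), fun h => d4 (hginj _ _ h)⟩
    · intro u hu v hv
      rcases hmemM' u hu with rfl | ⟨s, hs, rfl⟩ <;> rcases hmemM' v hv with rfl | ⟨t, ht, rfl⟩
      · omega
      · show ¬ (n < g t.1 ∧ g t.1 < n + 1 ∧ n + 1 < g t.2); omega
      · show ¬ (g s.1 < n ∧ n < g s.2 ∧ g s.2 < n + 1); omega
      · show ¬ (g s.1 < g t.1 ∧ g t.1 < g s.2 ∧ g s.2 < g t.2)
        have hc := hM.2.2 s hs t ht
        have a1 := hglt s.1 t.1; have a2 := hglt t.1 s.2; have a3 := hglt s.2 t.2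
        omega
  have hcard : M'.card = M.card + 1 := by
    rw [hM', Finset.card_insert_of_notMem, Finset.card_image_of_injOn]
    · intro s _ t _ h
      have h1 : g s.1 = g t.1 := congrArg Prod.fst h
      have h2 : g s.2 = g t.2 := congrArg Prod.snd h
      exact Prod.ext (hginj _ _ h1) (hginj _ _ h2)
    · intro hmem
      obtain ⟨s, _, he⟩ := Finset.mem_image.mp hmem
      have h1 : g s.1 = n := congrArg Prod.fst he
      exact (hgn s.1).1 h1
  have := ell_le (L₁ ++ a :: Letter.bar a :: L₂) M' hNC
  rw [len_long, hcard] at this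
  omega

set_option maxHeartbeats 1000000 in
lemma ncNormalize {k : ℕ} (X : List (Letter k)) (M : Finset (ℕ × ℕ)) (n : ℕ) (a : Letter k)
    (hM : IsNCMatching X M) (h1 : X[n]? = some a) (h2 : X[n+1]? = some (Letter.bar a)) :
    ∃ M', IsNCMatching X M' ∧ M.card ≤ M'.card ∧
      ∀ p ∈ M', p ≠ (n, n+1) → p.1 ≠ n ∧ p.1 ≠ n+1 ∧ p.2 ≠ n ∧ p.2 ≠ n+1 := by
  by_cases hmem : (n, n+1) ∈ M
  · exact ⟨M, hM, le_rfl, fun p hp hne => hM.2.1 p hp (n, n+1) hmem hne⟩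
  by_cases hp : ∃ p ∈ M, p.1 = n ∨ p.2 = n
  · by_cases hq : ∃ q ∈ M, q.1 = n+1 ∨ q.2 = n+1
    · -- both n and n+1 matched
      obtain ⟨p, hpM, hpn⟩ := hp
      obtain ⟨q, hqM, hqn⟩ := hq
      have hop := hM.1 p hpM
      have hoq := hM.1 q hqM
      have hpq : p ≠ q := by
        intro h; subst h
        apply hmem
        have : p = (n, n+1) := by
          have := hop.1
          ext
          · show p.1 = n; omega
          · show p.2 = n+1; omega
        rwa [← this]
      have hpnn : ¬ (p.1 = n ∧ p.2 = n+1) := by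
        intro ⟨e1, e2⟩
        have hpe : p = (n, n+1) := Prod.ext e1 e2
        exact hmem (hpe ▸ hpM)
      have hqnn : ¬ (q.1 = n ∧ q.2 = n+1) := by
        intro ⟨e1, e2⟩
        have hqe : q = (n, n+1) := Prod.ext e1 e2
        exact hmem (hqe ▸ hqM)
      -- other endpoints
      obtain ⟨i, hpf, hXi, hin, hin1⟩ :
          ∃ i, ((p.1 = i ∧ p.2 = n) ∨ (p.1 = n ∧ p.2 = i)) ∧
            X[i]? = some (Letter.bar a) ∧ i ≠ n ∧ i ≠ n+1 := by
        rcases hpn with h | h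
        · refine ⟨p.2, Or.inr ⟨h, rfl⟩, ?_, by omega, by omega⟩
          have := hop.2.2; rw [h, h1] at this
          exact map_bar_eq this.symm
        · refine ⟨p.1, Or.inl ⟨rfl, h⟩, ?_, by omega, by omega⟩
          have := hop.2.2; rw [h, h1] at this
          rw [this]; simp
      obtain ⟨j, hqf, hXj, hjn, hjn1⟩ :
          ∃ j, ((q.1 = j ∧ q.2 = n+1) ∨ (q.1 = n+1 ∧ q.2 = j)) ∧
            X[j]? = some a ∧ j ≠ n ∧ j ≠ n+1 := by
        rcases hqn with h | h
        · refine ⟨q.2, Or.inr ⟨h, rfl⟩, ?_, by omega, by omega⟩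
          have := hoq.2.2; rw [h, h2] at this
          have := map_bar_eq this.symm
          rwa [Letter.bar_bar] at this
        · refine ⟨q.1, Or.inl ⟨rfl, h⟩, ?_, by omega, by omega⟩
          have := hoq.2.2; rw [h, h2] at this
          rw [this]; simp [Letter.bar]
      have hdpq := hM.2.1 p hpM q hqM hpq
      have hij : i ≠ j := by
        obtain ⟨d1, d2, d3, d4⟩ := hdpq
        rcases hpf with ⟨e1, e2⟩ | ⟨e1, e2⟩ <;> rcases hqf with ⟨f1, f2⟩ | ⟨f1, f2⟩ <;> omega
      set r : ℕ × ℕ := (min i j, max i j) with hr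
      have hr1 : r.1 = min i j := rfl
      have hr2 : r.2 = max i j := rfl
      set E : Finset (ℕ × ℕ) := (M.erase p).erase q with hE
      have hEmem : ∀ s ∈ E, s ∈ M ∧ s ≠ p ∧ s ≠ q := by
        intro s hs
        have h' := Finset.mem_erase.mp hs
        have h'' := Finset.mem_erase.mp h'.2
        exact ⟨h''.2, h''.1, h'.1⟩
      have avoid : ∀ s ∈ E, s.1 ≠ n ∧ s.1 ≠ n+1 ∧ s.1 ≠ i ∧ s.1 ≠ j ∧
          s.2 ≠ n ∧ s.2 ≠ n+1 ∧ s.2 ≠ i ∧ s.2 ≠ j := by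
        intro s hs
        obtain ⟨hsM, hsp, hsq⟩ := hEmem s hs
        obtain ⟨d1, d2, d3, d4⟩ := hM.2.1 s hsM p hpM hsp
        obtain ⟨e1, e2, e3, e4⟩ := hM.2.1 s hsM q hqM hsq
        rcases hpf with ⟨f1, f2⟩ | ⟨f1, f2⟩ <;> rcases hqf with ⟨g1, g2⟩ | ⟨g1, g2⟩ <;> omega
      have hNC2 : IsNCMatching X (insert r E) := by
        have hNCE := isNC_subset (fun s hs => (hEmem s hs).1) hM
        refine ⟨?_, ?_, ?_⟩
        · intro u hu
          rcases Finset.mem_insert.mp hu with rfl | hu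
          · refine ⟨by omega, ?_, ?_⟩
            · have := lt_of_get hXi; have := lt_of_get hXj
              rw [hr2]; omega
            · rw [hr1, hr2]
              rcases Nat.lt_or_ge i j with h | h
              · rw [min_eq_left h.le, max_eq_right h.le, hXi, hXj]; simp
              · have h' : j < i := by omega
                rw [min_eq_right h'.le, max_eq_left h'.le, hXi, hXj]
                simp [Letter.bar_bar]
          · exact hNCE.1 u hu
        · intro u hu v hv hne
          rcases Finset.mem_insert.mp hu with rfl | hu <;> rcases Finset.mem_insert.mp hv with rfl | hv
          · exact absurd rfl hne
          · have := avoid v hv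
            rw [hr1, hr2]
            constructor; omega; constructor; omega; constructor; omega; omega
          · have := avoid u hu
            rw [hr1, hr2]
            constructor; omega; constructor; omega; constructor; omega; omega
          · exact hNCE.2.1 u hu v hv hne
        · intro u hu v hv
          have key : ∀ s ∈ E,
              (¬ (min i j < s.1 ∧ s.1 < max i j ∧ max i j < s.2)) ∧
              (¬ (s.1 < min i j ∧ min i j < s.2 ∧ s.2 < max i j)) := by
            intro s hs
            obtain ⟨hsM, _, _⟩ := hEmem s hs
            obtain ⟨hav1, hav2, hav3, hav4, hav5, hav6, hav7, hav8⟩ := avoid s hs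
            have c1 := hM.2.2 p hpM q hqM
            have c2 := hM.2.2 q hqM p hpM
            have c3 := hM.2.2 p hpM s hsM
            have c4 := hM.2.2 s hsM p hpM
            have c5 := hM.2.2 q hqM s hsM
            have c6 := hM.2.2 s hsM q hqM
            have o1 := hop.1
            have o2 := hoq.1
            have o3 := (hM.1 s hsM).1
            rcases hpf with ⟨f1, f2⟩ | ⟨f1, f2⟩ <;> rcases hqf with ⟨g1, g2⟩ | ⟨g1, g2⟩ <;>
              rw [f1, f2] at o1 c1 c2 c3 c4 <;> rw [g1, g2] at o2 c1 c2 c5 c6 <;>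
              constructor <;> omega
          rcases Finset.mem_insert.mp hu with rfl | hu <;> rcases Finset.mem_insert.mp hv with rfl | hv
          · rw [hr1, hr2]; omega
          · rw [hr1, hr2]; exact (key v hv).1
          · rw [hr1, hr2]; exact (key u hu).2
          · exact hNCE.2.2 u hu v hv
      have avoid2 : ∀ s ∈ insert r E, s.1 ≠ n ∧ s.1 ≠ n+1 ∧ s.2 ≠ n ∧ s.2 ≠ n+1 := by
        intro s hs
        rcases Finset.mem_insert.mp hs with rfl | hs
        · rw [hr1, hr2]; constructor; omega; constructor; omega; constructor; omega; omega
        · have := avoid s hs; omega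
      refine ⟨insert (n, n+1) (insert r E), isNC_insert_adj hNC2 h1 h2 avoid2, ?_, ?_⟩
      · -- card
        have hqE : q ∈ M.erase p := Finset.mem_erase.mpr ⟨hpq.symm, hqM⟩
        have hcE : E.card = M.card - 2 := by
          rw [hE, Finset.card_erase_of_mem hqE, Finset.card_erase_of_mem hpM]
          omega
        have hrE : r ∉ E := by
          intro hrEmem
          have := avoid r hrEmem
          rw [hr1, hr2] at this; omega
        have hnE : (n, n+1) ∉ insert r E := by
          intro hmem'
          exact (avoid2 _ hmem').1 rfl
        have h2M : 2 ≤ M.card := Finset.one_lt_card.mpr ⟨p, hpM, q, hqM, hpq⟩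
        rw [Finset.card_insert_of_notMem hnE, Finset.card_insert_of_notMem hrE, hcE]
        omega
      · intro s hs hne
        rcases Finset.mem_insert.mp hs with rfl | hs
        · exact absurd rfl hne
        · exact avoid2 s hs
    · -- only n matched
      push_neg at hq
      obtain ⟨p, hpM, hpn⟩ := hp
      have avoid : ∀ s ∈ M.erase p, s.1 ≠ n ∧ s.1 ≠ n+1 ∧ s.2 ≠ n ∧ s.2 ≠ n+1 := by
        intro s hs
        have h' := Finset.mem_erase.mp hs
        obtain ⟨d1, d2, d3, d4⟩ := hM.2.1 s h'.2 p hpM h'.1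
        have := hq s h'.2
        rcases hpn with h | h <;> omega
      have hNCE := isNC_subset (Finset.erase_subset p M) hM
      refine ⟨insert (n, n+1) (M.erase p), isNC_insert_adj hNCE h1 h2 avoid, ?_, ?_⟩
      · have hnE : (n, n+1) ∉ M.erase p := by
          intro h'; exact hmem (Finset.mem_of_mem_erase h')
        rw [Finset.card_insert_of_notMem hnE, Finset.card_erase_of_mem hpM]
        have : 1 ≤ M.card := Finset.card_pos.mpr ⟨p, hpM⟩
        omega
      · intro s hs hne
        rcases Finset.mem_insert.mp hs with rfl | hs
        · exact absurd rfl hne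
        · exact avoid s hs
  · by_cases hq : ∃ q ∈ M, q.1 = n+1 ∨ q.2 = n+1
    · -- only n+1 matched
      push_neg at hp
      obtain ⟨q, hqM, hqn⟩ := hq
      have avoid : ∀ s ∈ M.erase q, s.1 ≠ n ∧ s.1 ≠ n+1 ∧ s.2 ≠ n ∧ s.2 ≠ n+1 := by
        intro s hs
        have h' := Finset.mem_erase.mp hs
        obtain ⟨d1, d2, d3, d4⟩ := hM.2.1 s h'.2 q hqM h'.1
        have := hp s h'.2
        rcases hqn with h | h <;> omega
      have hNCE := isNC_subset (Finset.erase_subset q M) hM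
      refine ⟨insert (n, n+1) (M.erase q), isNC_insert_adj hNCE h1 h2 avoid, ?_, ?_⟩
      · have hnE : (n, n+1) ∉ M.erase q := by
          intro h'; exact hmem (Finset.mem_of_mem_erase h')
        rw [Finset.card_insert_of_notMem hnE, Finset.card_erase_of_mem hqM]
        have : 1 ≤ M.card := Finset.card_pos.mpr ⟨q, hqM⟩
        omega
      · intro s hs hne
        rcases Finset.mem_insert.mp hs with rfl | hs
        · exact absurd rfl hne
        · exact avoid s hs
    · push_neg at hp hq
      refine ⟨M, hM, le_rfl, fun s hs _ => ?_⟩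
      have := hp s hs; have := hq s hs
      omega

lemma lemB {k : ℕ} (L₁ L₂ : List (Letter k)) (a : Letter k) :
    ell (L₁ ++ L₂) ≤ ell (L₁ ++ a :: Letter.bar a :: L₂) := by
  obtain ⟨M₀, hM₀, hm₀⟩ := ell_exists (L₁ ++ a :: Letter.bar a :: L₂)
  set n := L₁.length with hn
  obtain ⟨M, hM, hcard, hav⟩ :=
    ncNormalize (L₁ ++ a :: Letter.bar a :: L₂) M₀ n a hM₀ (get_n L₁ L₂ a) (get_n1 L₁ L₂ a)
  set E : Finset (ℕ × ℕ) := M.erase (n, n+1) with hE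
  have hEav : ∀ s ∈ E, s.1 ≠ n ∧ s.1 ≠ n+1 ∧ s.2 ≠ n ∧ s.2 ≠ n+1 := by
    intro s hs
    have h' := Finset.mem_erase.mp hs
    exact hav s h'.2 h'.1
  have hEcard : M.card - 1 ≤ E.card := Finset.pred_card_le_card_erase
  set d : ℕ → ℕ := fun i => if i < n then i else i - 2 with hd
  have hdlt : ∀ x y, x ≠ n → x ≠ n+1 → y ≠ n → y ≠ n+1 → (d x < d y ↔ x < y) := by
    intro x y hx1 hx2 hy1 hy2; simp only [hd]; split_ifs <;> omega
  have hdinj : ∀ x y, x ≠ n → x ≠ n+1 → y ≠ n → y ≠ n+1 → d x = d y → x = y := by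
    intro x y hx1 hx2 hy1 hy2 h
    have l1 := hdlt x y hx1 hx2 hy1 hy2
    have l2 := hdlt y x hy1 hy2 hx1 hx2
    omega
  have hget : ∀ x, x ≠ n → x ≠ n+1 →
      (L₁ ++ L₂)[d x]? = (L₁ ++ a :: Letter.bar a :: L₂)[x]? := by
    intro x hx1 hx2
    rw [get_shift L₁ L₂ a (d x)]
    congr 1
    simp only [hd, ← hn]
    split_ifs <;> omega
  set M'' : Finset (ℕ × ℕ) := E.image (fun p => (d p.1, d p.2)) with hM''
  have hmem'' : ∀ u ∈ M'', ∃ s ∈ E, u = (d s.1, d s.2) := by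
    intro u hu
    obtain ⟨s, hs, he⟩ := Finset.mem_image.mp hu
    exact ⟨s, hs, he.symm⟩
  have hNC : IsNCMatching (L₁ ++ L₂) M'' := by
    refine ⟨?_, ?_, ?_⟩
    · intro u hu
      obtain ⟨s, hs, rfl⟩ := hmem'' u hu
      obtain ⟨a1, a2, a3, a4⟩ := hEav s hs
      obtain ⟨o1, o2, o3⟩ := hM.1 s (Finset.mem_of_mem_erase hs)
      refine ⟨(hdlt _ _ a1 a2 a3 a4).mpr o1, ?_, ?_⟩
      · rw [len_long] at o2
        show d s.2 < (L₁ ++ L₂).length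
        have hns : n ≤ (L₁ ++ L₂).length := by
          rw [List.length_append]; omega
        simp only [hd]; split <;> omega
      · show (L₁ ++ L₂)[d s.1]? = Option.map Letter.bar (L₁ ++ L₂)[d s.2]?
        rw [hget s.1 a1 a2, hget s.2 a3 a4]; exact o3
    · intro u hu v hv hne
      obtain ⟨s, hs, rfl⟩ := hmem'' u hu
      obtain ⟨t, ht, rfl⟩ := hmem'' v hv
      obtain ⟨a1, a2, a3, a4⟩ := hEav s hs
      obtain ⟨b1, b2, b3, b4⟩ := hEav t ht
      have hst : s ≠ t := fun h => hne (by rw [h])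
      obtain ⟨d1, d2, d3, d4⟩ := hM.2.1 s (Finset.mem_of_mem_erase hs) t (Finset.mem_of_mem_erase ht) hst
      exact ⟨fun h => d1 (hdinj _ _ a1 a2 b1 b2 h), fun h => d2 (hdinj _ _ a1 a2 b3 b4 h),
        fun h => d3 (hdinj _ _ a3 a4 b1 b2 h), fun h => d4 (hdinj _ _ a3 a4 b3 b4 h)⟩
    · intro u hu v hv
      obtain ⟨s, hs, rfl⟩ := hmem'' u hu
      obtain ⟨t, ht, rfl⟩ := hmem'' v hv
      obtain ⟨a1, a2, a3, a4⟩ := hEav s hs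
      obtain ⟨b1, b2, b3, b4⟩ := hEav t ht
      have hc := hM.2.2 s (Finset.mem_of_mem_erase hs) t (Finset.mem_of_mem_erase ht)
      have l1 := hdlt s.1 t.1 a1 a2 b1 b2
      have l2 := hdlt t.1 s.2 b1 b2 a3 a4
      have l3 := hdlt s.2 t.2 a3 a4 b3 b4
      show ¬ (d s.1 < d t.1 ∧ d t.1 < d s.2 ∧ d s.2 < d t.2)
      omega
  have hcard'' : M''.card = E.card := by
    rw [hM'']
    apply Finset.card_image_of_injOn
    intro s hs t ht h
    obtain ⟨a1, a2, a3, a4⟩ := hEav s hs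
    obtain ⟨b1, b2, b3, b4⟩ := hEav t ht
    have h1 : d s.1 = d t.1 := congrArg Prod.fst h
    have h2 : d s.2 = d t.2 := congrArg Prod.snd h
    exact Prod.ext (hdinj _ _ a1 a2 b1 b2 h1) (hdinj _ _ a3 a4 b3 b4 h2)
  have hle := ell_le (L₁ ++ L₂) M'' hNC
  rw [hcard''] at hle
  rw [len_long] at hm₀
  omega

lemma ell_step_eq {k : ℕ} (L₁ L₂ : List (Letter k)) (a : Letter k) :
    ell (L₁ ++ a :: Letter.bar a :: L₂) = ell (L₁ ++ L₂) :=
  le_antisymm (lemA L₁ L₂ a) (lemB L₁ L₂ a)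

lemma ell_of_step {k : ℕ} {X Y : List (Letter k)} (h : FreeGroup.Red.Step X Y) :
    ell X = ell Y := by
  cases h with
  | @not L₁ L₂ x b => exact ell_step_eq L₁ L₂ (x, b)

lemma ell_of_red {k : ℕ} {X Y : List (Letter k)} (h : FreeGroup.Red X Y) :
    ell X = ell Y := by
  induction h with
  | refl => rfl
  | tail _ h2 ih => exact ih.trans (ell_of_step h2)


end EllAux

/-- If two words over the alphabet of generators and their inverses represent the same
element of the free group, then the minimal number of unmatched letters over all
non-crossing matchings is the same for both words. -/
theorem ell_well_defined {k : ℕ} (X₁ X₂ : List (Letter k))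
    (h : FreeGroup.mk X₁ = FreeGroup.mk X₂) : ell X₁ = ell X₂ := by
  rw [FreeGroup.Red.exact] at h
  obtain ⟨L, h1, h2⟩ := h
  exact (ell_of_red h1).trans (ell_of_red h2).symm
end

section
/- The function ℓ_NC induced on the free group F_k is conjugacy invariant: for all g, h in F_k, ℓ_NC(h g h^{-1}) = ℓ_NC(g). -/
open scoped BigOperators

/-- The function induced by `ell` on the free group. -/
noncomputable def ellFG {k : ℕ} (g : FreeGroup (Fin k)) : ℕ :=
  sInf {m | ∃ X : List (Letter k), FreeGroup.mk X = g ∧ m = ell X}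

lemma ell_set_nonempty {k : ℕ} (X : List (Letter k)) :
    {m | ∃ M : Finset (ℕ × ℕ), IsNCMatching X M ∧ m = X.length - 2 * M.card}.Nonempty := by
  exact ⟨X.length, ∅, by simp [IsNCMatching], by simp⟩

lemma ell_wrap {k : ℕ} (a : Letter k) (Z : List (Letter k)) :
    ell (a :: (Z ++ [Letter.bar a])) ≤ ell Z := by
  obtain ⟨M, hM, hval⟩ := Nat.sInf_mem (ell_set_nonempty Z)
  set L := Z.length with hL
  set Y := a :: (Z ++ [Letter.bar a]) with hY
  have hYlen : Y.length = L + 2 := by simp [hY, hL]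
  have h0 : Y[0]? = some a := by simp [hY]
  have hLidx : Y[L + 1]? = some (Letter.bar a) := by
    rw [hY, List.getElem?_cons_succ, List.getElem?_append_right (le_refl L)]
    simp [hL]
  have hmid : ∀ i, i < L → Y[i + 1]? = Z[i]? := by
    intro i hi
    rw [hY, List.getElem?_cons_succ, List.getElem?_append_left hi]
  set M' : Finset (ℕ × ℕ) :=
    insert (0, L + 1) (M.image fun p => (p.1 + 1, p.2 + 1)) with hM'
  have hmem : ∀ q : ℕ × ℕ, q ∈ M' ↔ q = (0, L + 1) ∨ ∃ p ∈ M, (p.1 + 1, p.2 + 1) = q := by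
    intro q; simp [hM']
  have hbound : ∀ p ∈ M, p.1 < p.2 ∧ p.2 < L := fun p hp => ⟨(hM.1 p hp).1, (hM.1 p hp).2.1⟩
  have hnc : IsNCMatching Y M' := by
    refine ⟨?_, ?_, ?_⟩
    · intro p hp
      rcases (hmem p).1 hp with h | ⟨p', hp', h⟩
      · subst h
        refine ⟨Nat.succ_pos _, by omega, ?_⟩
        rw [h0, hLidx]
        simp [Letter.bar]
      · obtain ⟨h1, h2, h3⟩ := hM.1 p' hp'
        subst h
        refine ⟨by omega, by omega, ?_⟩
        rw [hmid _ (lt_trans h1 h2), hmid _ h2, h3]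
    · intro p hp q hq hpq
      rcases (hmem p).1 hp with h | ⟨p', hp', h⟩ <;>
        rcases (hmem q).1 hq with h' | ⟨q', hq', h'⟩
      · exact absurd (h.trans h'.symm) hpq
      · obtain ⟨b1, b2⟩ := hbound q' hq'
        subst h; subst h'; simp only []; omega
      · obtain ⟨b1, b2⟩ := hbound p' hp'
        subst h; subst h'; simp only []; omega
      · have hne : p' ≠ q' := by
          intro hcontra; apply hpq; rw [← h, ← h', hcontra]
        obtain ⟨c1, c2, c3, c4⟩ := hM.2.1 p' hp' q' hq' hne
        subst h; subst h'; simp only []; omega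
    · intro p hp q hq
      rcases (hmem p).1 hp with h | ⟨p', hp', h⟩ <;>
        rcases (hmem q).1 hq with h' | ⟨q', hq', h'⟩
      · subst h; subst h'; simp
      · obtain ⟨b1, b2⟩ := hbound q' hq'
        subst h; subst h'; simp only []; omega
      · subst h; subst h'; simp only []; omega
      · have := hM.2.2 p' hp' q' hq'
        subst h; subst h'; simp only []; omega
  have hcard : M'.card = M.card + 1 := by
    rw [hM', Finset.card_insert_of_notMem, Finset.card_image_of_injective]
    · intro p q hpq
      simp only [Prod.mk.injEq] at hpq
      exact Prod.ext (by omega) (by omega)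
    · simp
  have hle : ell Y ≤ Y.length - 2 * M'.card := Nat.sInf_le ⟨M', hnc, rfl⟩
  rw [hYlen, hcard] at hle
  have hez : ell Z = L - 2 * M.card := hval
  omega

lemma ell_conj_word {k : ℕ} (W X : List (Letter k)) :
    ell (W ++ X ++ FreeGroup.invRev W) ≤ ell X := by
  induction W with
  | nil => simp [FreeGroup.invRev]
  | cons a W ih =>
    have h1 : (a :: W) ++ X ++ FreeGroup.invRev (a :: W)
        = a :: ((W ++ X ++ FreeGroup.invRev W) ++ [Letter.bar a]) := by
      simp [FreeGroup.invRev, Letter.bar]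
    rw [h1]
    exact le_trans (ell_wrap a _) ih

lemma ellFG_set_nonempty {k : ℕ} (g : FreeGroup (Fin k)) :
    {m | ∃ X : List (Letter k), FreeGroup.mk X = g ∧ m = ell X}.Nonempty :=
  ⟨ell g.toWord, g.toWord, FreeGroup.mk_toWord, rfl⟩

lemma ellFG_conj_le {k : ℕ} (g h : FreeGroup (Fin k)) :
    ellFG (h * g * h⁻¹) ≤ ellFG g := by
  obtain ⟨X, hX, hval⟩ := Nat.sInf_mem (ellFG_set_nonempty g)
  set W := h.toWord with hW
  have hmk : FreeGroup.mk (W ++ X ++ FreeGroup.invRev W) = h * g * h⁻¹ := by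
    rw [← FreeGroup.mul_mk, ← FreeGroup.mul_mk, ← FreeGroup.inv_mk, hW,
      FreeGroup.mk_toWord, hX]
  refine le_trans (Nat.sInf_le ⟨W ++ X ++ FreeGroup.invRev W, hmk, rfl⟩) ?_
  rw [show ellFG g = ell X from hval]
  exact ell_conj_word W X

/-- `ℓ_NC` is conjugacy invariant on the free group. -/
theorem ellFG_conj_invariant {k : ℕ} (g h : FreeGroup (Fin k)) :
    ellFG (h * g * h⁻¹) = ellFG g := by
  refine le_antisymm (ellFG_conj_le g h) ?_
  have := ellFG_conj_le (h * g * h⁻¹) h⁻¹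
  have h2 : h⁻¹ * (h * g * h⁻¹) * h⁻¹⁻¹ = g := by group
  rwa [h2] at this
end

section
/- For every conjugacy-invariant length function l on the free group F_k with l(α_i) ≤ 1 for all generators α_i, and every g ∈ F_k, one has l(g) ≤ ℓ_NC(g). Consequently ℓ_NC is the maximal conjugacy-invariant length function bounded by 1 on generators. -/
open scoped BigOperators

/-- A conjugacy-invariant length function on a group `G`. -/
structure ConjInvLength (G : Type*) [Group G] where
  toFun : G → ℝ
  nonneg : ∀ g : G, 0 ≤ toFun g
  map_one : toFun 1 = 0
  pos : ∀ g : G, g ≠ 1 → 0 < toFun g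
  inv : ∀ g : G, toFun g⁻¹ = toFun g
  subadd : ∀ g h : G, toFun (g * h) ≤ toFun g + toFun h
  conj : ∀ g h : G, toFun (g * h * g⁻¹) = toFun h


namespace NCAux

variable {k : ℕ}

lemma bar_bar (x : Letter k) : Letter.bar (Letter.bar x) = x := by simp [Letter.bar]

lemma isNC_empty (X : List (Letter k)) : IsNCMatching X ∅ := ⟨by simp, by simp, by simp⟩

lemma ell_le {X : List (Letter k)} {M} (h : IsNCMatching X M) :
    ell X ≤ X.length - 2 * M.card := Nat.sInf_le ⟨M, h, rfl⟩

lemma ell_spec (X : List (Letter k)) :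
    ∃ M, IsNCMatching X M ∧ ell X = X.length - 2 * M.card := by
  have : ell X ∈ {m | ∃ M : Finset (ℕ × ℕ), IsNCMatching X M ∧ m = X.length - 2 * M.card} :=
    Nat.sInf_mem ⟨X.length, ∅, isNC_empty X, by simp⟩
  exact this

lemma two_card_le {X : List (Letter k)} {M} (h : IsNCMatching X M) :
    2 * M.card ≤ X.length := by
  obtain ⟨h1, h2, _⟩ := h
  have hfst : (M.image Prod.fst).card = M.card := Finset.card_image_of_injOn (by
    intro p hp q hq hpq
    by_contra hne
    exact (h2 p hp q hq hne).1 hpq)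
  have hsnd : (M.image Prod.snd).card = M.card := Finset.card_image_of_injOn (by
    intro p hp q hq hpq
    by_contra hne
    exact (h2 q hq p hp (Ne.symm hne)).2.2.2 hpq.symm)
  have hdisj : Disjoint (M.image Prod.fst) (M.image Prod.snd) := by
    rw [Finset.disjoint_left]
    rintro x hx hy
    rw [Finset.mem_image] at hx hy
    obtain ⟨p, hp, rfl⟩ := hx
    obtain ⟨q, hq, he⟩ := hy
    by_cases hpq : p = q
    · subst hpq; have := (h1 p hp).1; omega
    · exact (h2 p hp q hq hpq).2.1 he.symm
  have hsub : (M.image Prod.fst ∪ M.image Prod.snd) ⊆ Finset.range X.length := by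
    intro x hx
    rw [Finset.mem_union] at hx
    rw [Finset.mem_range]
    rcases hx with hx | hx <;> (rw [Finset.mem_image] at hx; obtain ⟨p, hp, rfl⟩ := hx)
    · have := h1 p hp; omega
    · have := h1 p hp; omega
  have hle := Finset.card_le_card hsub
  rw [Finset.card_union_of_disjoint hdisj, hfst, hsnd, Finset.card_range] at hle
  omega

lemma window_matching {X Y : List (Letter k)} {M : Finset (ℕ × ℕ)}
    (h : IsNCMatching X M) (s : ℕ)
    (hY : ∀ i, i < Y.length → Y[i]? = X[s + i]?) :
    IsNCMatching Y ((M.filter fun p => s ≤ p.1 ∧ p.2 < s + Y.length).image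
      fun p => (p.1 - s, p.2 - s)) ∧
    ((M.filter fun p => s ≤ p.1 ∧ p.2 < s + Y.length).image
      fun p => (p.1 - s, p.2 - s)).card
      = (M.filter fun p => s ≤ p.1 ∧ p.2 < s + Y.length).card := by
  obtain ⟨h1, h2, h3⟩ := h
  have hmem : ∀ p ∈ M.filter (fun p : ℕ × ℕ => s ≤ p.1 ∧ p.2 < s + Y.length),
      p ∈ M ∧ s ≤ p.1 ∧ p.1 < p.2 ∧ p.2 < s + Y.length := by
    intro p hp
    rw [Finset.mem_filter] at hp
    exact ⟨hp.1, hp.2.1, (h1 p hp.1).1, hp.2.2⟩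
  have hinj : Set.InjOn (fun p : ℕ × ℕ => (p.1 - s, p.2 - s))
      (M.filter fun p => s ≤ p.1 ∧ p.2 < s + Y.length) := by
    intro p hp q hq hpq
    have hp' := hmem p hp
    have hq' := hmem q hq
    obtain ⟨p1, p2⟩ := p
    obtain ⟨q1, q2⟩ := q
    simp only [Prod.mk.injEq] at hpq ⊢
    simp only at hp' hq'
    omega
  refine ⟨⟨?_, ?_, ?_⟩, Finset.card_image_of_injOn hinj⟩
  · intro p' hp'
    rw [Finset.mem_image] at hp'
    obtain ⟨p, hp, rfl⟩ := hp'
    obtain ⟨hpM, hs1, hlt, hs2⟩ := hmem p hp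
    refine ⟨by omega, by omega, ?_⟩
    have e1 : s + (p.1 - s) = p.1 := by omega
    have e2 : s + (p.2 - s) = p.2 := by omega
    dsimp only
    rw [hY _ (by omega), hY _ (by omega), e1, e2]
    exact (h1 p hpM).2.2
  · intro p' hp' q' hq' hne
    rw [Finset.mem_image] at hp' hq'
    obtain ⟨p, hp, rfl⟩ := hp'
    obtain ⟨q, hq, rfl⟩ := hq'
    obtain ⟨hpM, hs1, hlt, hs2⟩ := hmem p hp
    obtain ⟨hqM, ht1, hlt', ht2⟩ := hmem q hq
    have hpq : p ≠ q := by rintro rfl; exact hne rfl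
    have := h2 p hpM q hqM hpq
    obtain ⟨p1, p2⟩ := p
    obtain ⟨q1, q2⟩ := q
    simp only at this hs1 hlt hs2 ht1 hlt' ht2 ⊢
    omega
  · intro p' hp' q' hq'
    rw [Finset.mem_image] at hp' hq'
    obtain ⟨p, hp, rfl⟩ := hp'
    obtain ⟨q, hq, rfl⟩ := hq'
    obtain ⟨hpM, hs1, hlt, hs2⟩ := hmem p hp
    obtain ⟨hqM, ht1, hlt', ht2⟩ := hmem q hq
    have := h3 p hpM q hqM
    obtain ⟨p1, p2⟩ := p
    obtain ⟨q1, q2⟩ := q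
    simp only at this hs1 hlt hs2 ht1 hlt' ht2 ⊢
    omega


lemma tail_matching {a : Letter k} {X' : List (Letter k)} {M : Finset (ℕ × ℕ)}
    (h : IsNCMatching (a :: X') M) (h0 : ∀ j, (0, j) ∉ M) :
    ∃ M', IsNCMatching X' M' ∧ M'.card = M.card := by
  have hY : ∀ i, i < X'.length → X'[i]? = (a :: X')[1 + i]? := by
    intro i hi
    rw [show 1 + i = i + 1 by omega, List.getElem?_cons_succ]
  obtain ⟨hm, hc⟩ := window_matching h 1 hY
  refine ⟨_, hm, ?_⟩
  rw [hc]
  congr 1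
  apply Finset.filter_true_of_mem
  intro p hp
  have hb := h.1 p hp
  obtain ⟨p1, p2⟩ := p
  simp only [List.length_cons] at hb
  have hp1 : 1 ≤ p1 := by
    by_contra h'
    have : p1 = 0 := by omega
    subst this
    exact h0 p2 hp
  exact ⟨hp1, by omega⟩

lemma mk_inv_single {a b : Letter k} (hab : a = Letter.bar b) :
    (FreeGroup.mk [a])⁻¹ = FreeGroup.mk [b] := by
  rw [FreeGroup.inv_mk]
  congr 1
  subst hab
  simp [FreeGroup.invRev, Letter.bar]

lemma mk_decomp {a b : Letter k} {X' B C : List (Letter k)} (hdec : X' = B ++ b :: C) :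
    FreeGroup.mk (a :: X') =
      FreeGroup.mk [a] * FreeGroup.mk B * FreeGroup.mk [b] * FreeGroup.mk C := by
  rw [FreeGroup.mul_mk, FreeGroup.mul_mk, FreeGroup.mul_mk, hdec]
  congr 1
  simp

lemma split_matching {a : Letter k} {X' : List (Letter k)} {M : Finset (ℕ × ℕ)} {j : ℕ}
    (h : IsNCMatching (a :: X') M) (hj : (0, j) ∈ M) :
    ∃ (B C : List (Letter k)) (b : Letter k) (MB MC : Finset (ℕ × ℕ)),
      X' = B ++ b :: C ∧ a = Letter.bar b ∧
      IsNCMatching B MB ∧ IsNCMatching C MC ∧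
      M.card = MB.card + MC.card + 1 ∧
      X'.length = B.length + C.length + 1 := by
  obtain ⟨h1, h2, h3⟩ := h
  obtain ⟨hj1, hj2, hj3⟩ := h1 _ hj
  simp only [List.length_cons] at hj2
  simp only at hj1 hj2 hj3
  have hjlen : j - 1 < X'.length := by omega
  set b := X'[j-1] with hbdef
  have hb : a = Letter.bar b := by
    have hji : (a :: X')[j]? = X'[j-1]? := by
      match j, hj1 with
      | (m+1), _ => simp
    rw [hji, List.getElem?_eq_getElem hjlen] at hj3
    simp only [List.getElem?_cons_zero, Option.map_some] at hj3
    exact Option.some.inj hj3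
  have hdec : X' = X'.take (j-1) ++ b :: X'.drop j := by
    conv_lhs => rw [← List.take_append_drop (j-1) X']
    congr 1
    rw [List.drop_eq_getElem_cons hjlen, Nat.sub_add_cancel hj1]
  have hB : (X'.take (j-1)).length = j - 1 := by rw [List.length_take]; omega
  have hC : (X'.drop j).length = X'.length - j := List.length_drop
  have hYB : ∀ i, i < (X'.take (j-1)).length → (X'.take (j-1))[i]? = (a :: X')[1 + i]? := by
    intro i hi
    rw [hB] at hi
    rw [List.getElem?_take_of_lt hi, show 1 + i = i + 1 by omega, List.getElem?_cons_succ]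
  obtain ⟨hMB, hcB⟩ := window_matching ⟨h1, h2, h3⟩ 1 hYB
  have hYC : ∀ i, i < (X'.drop j).length → (X'.drop j)[i]? = (a :: X')[(j+1) + i]? := by
    intro i hi
    rw [List.getElem?_drop, show (j+1) + i = (j + i) + 1 by omega,
      List.getElem?_cons_succ]
  obtain ⟨hMC, hcC⟩ := window_matching ⟨h1, h2, h3⟩ (j+1) hYC
  set F1 := M.filter (fun p : ℕ × ℕ => 1 ≤ p.1 ∧ p.2 < 1 + (X'.take (j-1)).length) with hF1
  set F2 := M.filter (fun p : ℕ × ℕ => j+1 ≤ p.1 ∧ p.2 < (j+1) + (X'.drop j).length) with hF2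
  have hjX : j ≤ X'.length := by omega
  have hsplit : M = insert (0, j) (F1 ∪ F2) := by
    ext p
    simp only [Finset.mem_insert, Finset.mem_union, hF1, hF2, Finset.mem_filter]
    constructor
    · intro hp
      by_cases hpj : p = (0, j)
      · exact Or.inl hpj
      · right
        have hd := h2 p hp (0, j) hj hpj
        have hb' := h1 p hp
        have hnc := h3 (0, j) hj p hp
        obtain ⟨p1, p2⟩ := p
        simp only [List.length_cons] at hb'
        simp only at hd hb' hnc
        by_cases hcase : p1 < j
        · exact Or.inl ⟨hp, by omega, by omega⟩
        · exact Or.inr ⟨hp, by omega, by omega⟩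
    · rintro (rfl | hp | hp)
      · exact hj
      · exact hp.1
      · exact hp.1
  have hnotmem : (0, j) ∉ F1 ∪ F2 := by
    simp only [Finset.mem_union, hF1, hF2, Finset.mem_filter]
    rintro (⟨_, hc1, _⟩ | ⟨_, hc1, _⟩) <;> omega
  have hdisj : Disjoint F1 F2 := by
    rw [Finset.disjoint_left]
    intro p hp1 hp2
    rw [hF1, Finset.mem_filter] at hp1
    rw [hF2, Finset.mem_filter] at hp2
    have := (h1 p hp1.1).1
    obtain ⟨p1, p2⟩ := p
    simp only at hp1 hp2 this
    omega
  have hcard : M.card = F1.card + F2.card + 1 := by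
    rw [hsplit, Finset.card_insert_of_notMem hnotmem, Finset.card_union_of_disjoint hdisj]
  exact ⟨X'.take (j-1), X'.drop j, b, _, _, hdec, hb, hMB, hMC,
    by rw [hcard, hcB, hcC], by omega⟩

lemma complete_eq_one : ∀ (n : ℕ) (X : List (Letter k)) (M : Finset (ℕ × ℕ)), X.length ≤ n →
    IsNCMatching X M → X.length = 2 * M.card → FreeGroup.mk X = 1 := by
  intro n
  induction n with
  | zero =>
    intro X M hlen _ _
    have hX : X = [] := List.length_eq_zero_iff.mp (Nat.le_zero.mp hlen)
    subst hX
    exact FreeGroup.one_eq_mk.symm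
  | succ n ih =>
    intro X M hlen h hcomp
    match X with
    | [] => exact FreeGroup.one_eq_mk.symm
    | a :: X' =>
      by_cases hex : ∃ j, (0, j) ∈ M
      · obtain ⟨j, hj⟩ := hex
        obtain ⟨B, C, b, MB, MC, hdec, hab, hMB, hMC, hcard, hlen'⟩ := split_matching h hj
        have h2B := two_card_le hMB
        have h2C := two_card_le hMC
        simp only [List.length_cons] at hlen hcomp
        have hB1 := ih B MB (by omega) hMB (by omega)
        have hC1 := ih C MC (by omega) hMC (by omega)
        rw [mk_decomp hdec, hB1, hC1, mul_one, mul_one, ← mk_inv_single hab, mul_inv_cancel]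
      · push_neg at hex
        obtain ⟨M', hM', hc⟩ := tail_matching h hex
        have := two_card_le hM'
        simp only [List.length_cons] at hcomp
        omega


lemma single_le (l : ConjInvLength (FreeGroup (Fin k)))
    (hl : ∀ i : Fin k, l.toFun (FreeGroup.of i) ≤ 1) (a : Letter k) :
    l.toFun (FreeGroup.mk [a]) ≤ 1 := by
  obtain ⟨i, bb⟩ := a
  cases bb
  · have hmk : FreeGroup.mk [((i : Fin k), false)] = (FreeGroup.of i)⁻¹ := by
      rw [show FreeGroup.of i = FreeGroup.mk [((i : Fin k), true)] from rfl, FreeGroup.inv_mk]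
      congr 1
    rw [hmk, l.inv]
    exact hl i
  · exact hl i

lemma lemA (l : ConjInvLength (FreeGroup (Fin k)))
    (hl : ∀ i : Fin k, l.toFun (FreeGroup.of i) ≤ 1) :
    ∀ (n : ℕ) (X : List (Letter k)) (M : Finset (ℕ × ℕ)), X.length ≤ n →
      IsNCMatching X M →
      l.toFun (FreeGroup.mk X) ≤ (X.length : ℝ) - 2 * M.card := by
  intro n
  induction n with
  | zero =>
    intro X M hlen h
    have hX : X = [] := List.length_eq_zero_iff.mp (Nat.le_zero.mp hlen)
    subst hX
    have hM : M = ∅ := Finset.eq_empty_of_forall_notMem (fun p hp => by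
      have := (h.1 p hp).2.1; simp at this)
    subst hM
    simp [← FreeGroup.one_eq_mk, l.map_one]
  | succ n ih =>
    intro X M hlen h
    match X with
    | [] =>
      have hM : M = ∅ := Finset.eq_empty_of_forall_notMem (fun p hp => by
        have := (h.1 p hp).2.1; simp at this)
      subst hM
      simp [← FreeGroup.one_eq_mk, l.map_one]
    | a :: X' =>
      by_cases hex : ∃ j, (0, j) ∈ M
      · obtain ⟨j, hj⟩ := hex
        obtain ⟨B, C, b, MB, MC, hdec, hab, hMB, hMC, hcard, hlen'⟩ := split_matching h hj
        simp only [List.length_cons] at hlen ⊢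
        have ihB := ih B MB (by omega) hMB
        have ihC := ih C MC (by omega) hMC
        have hmk : FreeGroup.mk (a :: X') =
            FreeGroup.mk [a] * FreeGroup.mk B * (FreeGroup.mk [a])⁻¹ * FreeGroup.mk C := by
          rw [mk_inv_single hab]; exact mk_decomp hdec
        have hstep : l.toFun (FreeGroup.mk (a :: X')) ≤
            l.toFun (FreeGroup.mk B) + l.toFun (FreeGroup.mk C) := by
          rw [hmk]
          calc l.toFun (FreeGroup.mk [a] * FreeGroup.mk B * (FreeGroup.mk [a])⁻¹ *
                FreeGroup.mk C)
              ≤ l.toFun (FreeGroup.mk [a] * FreeGroup.mk B * (FreeGroup.mk [a])⁻¹) +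
                l.toFun (FreeGroup.mk C) := l.subadd _ _
            _ = _ := by rw [l.conj]
        have hc : (M.card : ℝ) = MB.card + MC.card + 1 := by exact_mod_cast hcard
        have hL : ((X'.length : ℝ) + 1) = B.length + C.length + 2 := by
          have : (X'.length : ℝ) = B.length + C.length + 1 := by exact_mod_cast hlen'
          linarith
        push_cast
        rw [hc] at *
        linarith [hstep, ihB, ihC, hL]
      · push_neg at hex
        obtain ⟨M', hM', hc⟩ := tail_matching h hex
        have ih' := ih X' M' (by simp only [List.length_cons] at hlen; omega) hM'
        have hstep : l.toFun (FreeGroup.mk (a :: X')) ≤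
            l.toFun (FreeGroup.mk [a]) + l.toFun (FreeGroup.mk X') := by
          rw [show FreeGroup.mk (a :: X') = FreeGroup.mk [a] * FreeGroup.mk X' by
            rw [FreeGroup.mul_mk]; rfl]
          exact l.subadd _ _
        have h1 := single_le l hl a
        simp only [List.length_cons]
        have hcc : (M'.card : ℝ) = M.card := by exact_mod_cast hc
        push_cast
        linarith [ih', hstep, h1, hcc]


lemma ell_append (X Y : List (Letter k)) : ell (X ++ Y) ≤ ell X + ell Y := by
  obtain ⟨MX, hMX, hX⟩ := ell_spec X
  obtain ⟨MY, hMY, hY⟩ := ell_spec Y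
  have h2X := two_card_le hMX
  have h2Y := two_card_le hMY
  set n := X.length with hn
  set f : ℕ × ℕ → ℕ × ℕ := fun p => (p.1 + n, p.2 + n) with hf
  have hmemX : ∀ p ∈ MX, p.1 < p.2 ∧ p.2 < n :=
    fun p hp => ⟨(hMX.1 p hp).1, (hMX.1 p hp).2.1⟩
  have hmemY : ∀ p ∈ MY, p.1 < p.2 ∧ p.2 < Y.length :=
    fun p hp => ⟨(hMY.1 p hp).1, (hMY.1 p hp).2.1⟩
  have hinj : Set.InjOn f MY := by
    intro p _ q _ hpq
    obtain ⟨p1, p2⟩ := p; obtain ⟨q1, q2⟩ := q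
    simp only [hf, Prod.mk.injEq] at hpq ⊢
    omega
  have hmem : ∀ p ∈ MX ∪ MY.image f, p ∈ MX ∨ ∃ q ∈ MY, p = f q := by
    intro p hp
    rw [Finset.mem_union, Finset.mem_image] at hp
    rcases hp with hp | ⟨q, hq, rfl⟩
    · exact Or.inl hp
    · exact Or.inr ⟨q, hq, rfl⟩
  have hM : IsNCMatching (X ++ Y) (MX ∪ MY.image f) := by
    refine ⟨?_, ?_, ?_⟩
    · intro p hp
      rcases hmem p hp with hp | ⟨q, hq, rfl⟩
      · obtain ⟨hlt, hl2, hget⟩ := hMX.1 p hp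
        refine ⟨hlt, by rw [List.length_append]; omega, ?_⟩
        rw [List.getElem?_append_left (by omega : p.1 < X.length),
          List.getElem?_append_left (by omega : p.2 < X.length)]
        exact hget
      · obtain ⟨hlt, hl2, hget⟩ := hMY.1 q hq
        refine ⟨by simp [hf]; omega, by rw [List.length_append]; simp [hf]; omega, ?_⟩
        simp only [hf]
        rw [List.getElem?_append_right (by omega : X.length ≤ q.1 + n),
          List.getElem?_append_right (by omega : X.length ≤ q.2 + n)]
        simpa [hn] using hget
    · intro p hp q hq hne
      rcases hmem p hp with hp' | ⟨p', hp', rfl⟩ <;>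
        rcases hmem q hq with hq' | ⟨q', hq', rfl⟩
      · exact hMX.2.1 p hp' q hq' hne
      · have h1 := hmemX p hp'
        have h2 := hmemY q' hq'
        obtain ⟨p1, p2⟩ := p; obtain ⟨q1, q2⟩ := q'
        simp only [hf] at *
        omega
      · have h1 := hmemX q hq'
        have h2 := hmemY p' hp'
        obtain ⟨p1, p2⟩ := p'; obtain ⟨q1, q2⟩ := q
        simp only [hf] at *
        omega
      · have hne' : p' ≠ q' := by rintro rfl; exact hne rfl
        have := hMY.2.1 p' hp' q' hq' hne'
        obtain ⟨p1, p2⟩ := p'; obtain ⟨q1, q2⟩ := q'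
        simp only [hf] at *
        omega
    · intro p hp q hq
      rcases hmem p hp with hp' | ⟨p', hp', rfl⟩ <;>
        rcases hmem q hq with hq' | ⟨q', hq', rfl⟩
      · exact hMX.2.2 p hp' q hq'
      · have h1 := hmemX p hp'
        have h2 := hmemY q' hq'
        obtain ⟨p1, p2⟩ := p; obtain ⟨q1, q2⟩ := q'
        simp only [hf] at *
        omega
      · have h1 := hmemX q hq'
        have h2 := hmemY p' hp'
        obtain ⟨p1, p2⟩ := p'; obtain ⟨q1, q2⟩ := q
        simp only [hf] at *
        omega
      · have := hMY.2.2 p' hp' q' hq'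
        obtain ⟨p1, p2⟩ := p'; obtain ⟨q1, q2⟩ := q'
        simp only [hf] at *
        omega
  have hdisj : Disjoint MX (MY.image f) := by
    rw [Finset.disjoint_left]
    intro p hp hp'
    rw [Finset.mem_image] at hp'
    obtain ⟨q, hq, rfl⟩ := hp'
    have h1 := hmemX _ hp
    obtain ⟨q1, q2⟩ := q
    simp only [hf] at h1
    omega
  have hcard : (MX ∪ MY.image f).card = MX.card + MY.card := by
    rw [Finset.card_union_of_disjoint hdisj, Finset.card_image_of_injOn hinj]
  have := ell_le hM
  rw [hcard, List.length_append] at this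
  omega

lemma ell_invRev (X : List (Letter k)) : ell (FreeGroup.invRev X) ≤ ell X := by
  obtain ⟨M, hM, hE⟩ := ell_spec X
  set n := X.length with hn
  have hRlen : (FreeGroup.invRev X).length = n := FreeGroup.invRev_length
  have hfbar : (fun g : Letter k => (g.1, !g.2)) = Letter.bar := funext fun x => rfl
  have hRget : ∀ t, t < n → (FreeGroup.invRev X)[t]? = (X[n - 1 - t]?).map Letter.bar := by
    intro t ht
    rw [FreeGroup.invRev, hfbar, List.getElem?_reverse (by simpa using ht),
      List.length_map, List.getElem?_map]
  set f : ℕ × ℕ → ℕ × ℕ := fun p => (n - 1 - p.2, n - 1 - p.1) with hf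
  have hmem : ∀ p ∈ M, p.1 < p.2 ∧ p.2 < n :=
    fun p hp => ⟨(hM.1 p hp).1, (hM.1 p hp).2.1⟩
  have hinj : Set.InjOn f M := by
    intro p hp q hq hpq
    have h1 := hmem p hp; have h2 := hmem q hq
    obtain ⟨p1, p2⟩ := p; obtain ⟨q1, q2⟩ := q
    simp only [hf, Prod.mk.injEq] at *
    omega
  have hMf : IsNCMatching (FreeGroup.invRev X) (M.image f) := by
    refine ⟨?_, ?_, ?_⟩
    · intro p' hp'
      rw [Finset.mem_image] at hp'
      obtain ⟨p, hp, rfl⟩ := hp'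
      obtain ⟨hlt, hl2, hget⟩ := hM.1 p hp
      refine ⟨by simp [hf]; omega, by rw [hRlen]; simp [hf]; omega, ?_⟩
      simp only [hf]
      rw [hRget _ (by omega), hRget _ (by omega),
        show n - 1 - (n - 1 - p.2) = p.2 by omega, show n - 1 - (n - 1 - p.1) = p.1 by omega,
        hget]
      cases hx : X[p.2]? with
      | none => simp
      | some c => simp [bar_bar]
    · intro p' hp' q' hq' hne
      rw [Finset.mem_image] at hp' hq'
      obtain ⟨p, hp, rfl⟩ := hp'
      obtain ⟨q, hq, rfl⟩ := hq'
      have hpq : p ≠ q := by rintro rfl; exact hne rfl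
      have := hM.2.1 p hp q hq hpq
      have h1 := hmem p hp; have h2 := hmem q hq
      obtain ⟨p1, p2⟩ := p; obtain ⟨q1, q2⟩ := q
      simp only [hf] at *
      omega
    · intro p' hp' q' hq'
      rw [Finset.mem_image] at hp' hq'
      obtain ⟨p, hp, rfl⟩ := hp'
      obtain ⟨q, hq, rfl⟩ := hq'
      have := hM.2.2 q hq p hp
      have h1 := hmem p hp; have h2 := hmem q hq
      obtain ⟨p1, p2⟩ := p; obtain ⟨q1, q2⟩ := q
      simp only [hf] at *
      omega
  have := ell_le hMf
  rw [hRlen, Finset.card_image_of_injOn hinj] at this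
  omega

lemma ell_conj (U W : List (Letter k)) :
    ell (U ++ W ++ FreeGroup.invRev U) ≤ ell W := by
  obtain ⟨MW, hMW, hE⟩ := ell_spec W
  have h2W := two_card_le hMW
  set u := U.length with hu
  set w := W.length with hw
  set V := U ++ W ++ FreeGroup.invRev U with hV
  have hVlen : V.length = u + w + u := by
    simp [hV, List.length_append, FreeGroup.invRev_length]
    omega
  have hfbar : (fun g : Letter k => (g.1, !g.2)) = Letter.bar := funext fun x => rfl
  have hV1 : ∀ t, t < u → V[t]? = U[t]? := by
    intro t ht
    rw [hV, List.append_assoc, List.getElem?_append_left (by omega : t < U.length)]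
  have hV2 : ∀ t, t < w → V[u + t]? = W[t]? := by
    intro t ht
    rw [hV, List.append_assoc, List.getElem?_append_right (by omega : U.length ≤ u + t),
      List.getElem?_append_left]
    · congr 1; omega
    · simp only [← hu]; omega
  have hV3 : ∀ t, t < u → V[u + w + t]? = (U[u - 1 - t]?).map Letter.bar := by
    intro t ht
    rw [hV, List.append_assoc, List.getElem?_append_right (by omega : U.length ≤ u + w + t),
      List.getElem?_append_right (by simp only [← hu, ← hw]; omega)]
    rw [FreeGroup.invRev, hfbar]
    rw [List.getElem?_reverse (by simp only [List.length_map, ← hu, ← hw]; omega)]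
    rw [List.length_map, List.getElem?_map]
    congr 2
    simp only [← hu, ← hw]
    omega
  set fW : ℕ × ℕ → ℕ × ℕ := fun p => (p.1 + u, p.2 + u) with hfW
  set fU : ℕ → ℕ × ℕ := fun i => (i, u + w + (u - 1 - i)) with hfU
  set M : Finset (ℕ × ℕ) := MW.image fW ∪ (Finset.range u).image fU with hMdef
  have hmemW : ∀ p ∈ MW, p.1 < p.2 ∧ p.2 < w :=
    fun p hp => ⟨(hMW.1 p hp).1, (hMW.1 p hp).2.1⟩
  have hmem : ∀ p ∈ M, (∃ q ∈ MW, p = fW q) ∨ ∃ i < u, p = fU i := by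
    intro p hp
    rw [hMdef, Finset.mem_union, Finset.mem_image, Finset.mem_image] at hp
    rcases hp with ⟨q, hq, rfl⟩ | ⟨i, hi, rfl⟩
    · exact Or.inl ⟨q, hq, rfl⟩
    · exact Or.inr ⟨i, Finset.mem_range.mp hi, rfl⟩
  have hMnc : IsNCMatching V M := by
    refine ⟨?_, ?_, ?_⟩
    · intro p hp
      rcases hmem p hp with ⟨q, hq, rfl⟩ | ⟨i, hi, rfl⟩
      · obtain ⟨hlt, hl2, hget⟩ := hMW.1 q hq
        refine ⟨by simp [hfW]; omega, by rw [hVlen]; simp [hfW]; omega, ?_⟩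
        simp only [hfW]
        rw [show q.1 + u = u + q.1 by omega, show q.2 + u = u + q.2 by omega,
          hV2 _ (by omega), hV2 _ (by omega)]
        exact hget
      · refine ⟨by simp [hfU]; omega, by rw [hVlen]; simp [hfU]; omega, ?_⟩
        simp only [hfU]
        rw [hV1 _ hi, hV3 _ (by omega), show u - 1 - (u - 1 - i) = i by omega]
        rw [List.getElem?_eq_getElem (by omega : i < U.length)]
        simp [bar_bar]
    · intro p hp q hq hne
      rcases hmem p hp with ⟨p', hp', rfl⟩ | ⟨i, hi, rfl⟩ <;>
        rcases hmem q hq with ⟨q', hq', rfl⟩ | ⟨i', hi', rfl⟩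
      · have hne' : p' ≠ q' := by rintro rfl; exact hne rfl
        have := hMW.2.1 p' hp' q' hq' hne'
        have h1 := hmemW p' hp'; have h2 := hmemW q' hq'
        obtain ⟨p1, p2⟩ := p'; obtain ⟨q1, q2⟩ := q'
        simp only [hfW] at *
        omega
      · have h1 := hmemW p' hp'
        obtain ⟨p1, p2⟩ := p'
        simp only [hfW, hfU] at *
        omega
      · have h1 := hmemW q' hq'
        obtain ⟨q1, q2⟩ := q'
        simp only [hfW, hfU] at *
        omega
      · have hii : i ≠ i' := by rintro rfl; exact hne rfl
        simp only [hfU] at *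
        omega
    · intro p hp q hq
      rcases hmem p hp with ⟨p', hp', rfl⟩ | ⟨i, hi, rfl⟩ <;>
        rcases hmem q hq with ⟨q', hq', rfl⟩ | ⟨i', hi', rfl⟩
      · have := hMW.2.2 p' hp' q' hq'
        have h1 := hmemW p' hp'; have h2 := hmemW q' hq'
        obtain ⟨p1, p2⟩ := p'; obtain ⟨q1, q2⟩ := q'
        simp only [hfW] at *
        omega
      · have h1 := hmemW p' hp'
        obtain ⟨p1, p2⟩ := p'
        simp only [hfW, hfU] at *
        omega
      · have h1 := hmemW q' hq'
        obtain ⟨q1, q2⟩ := q'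
        simp only [hfW, hfU] at *
        omega
      · simp only [hfU] at *
        omega
  have hinjW : Set.InjOn fW MW := by
    intro p _ q _ hpq
    obtain ⟨p1, p2⟩ := p; obtain ⟨q1, q2⟩ := q
    simp only [hfW, Prod.mk.injEq] at hpq ⊢
    omega
  have hinjU : Set.InjOn fU (Finset.range u) := by
    intro i hi j hj hij
    simp only [Finset.coe_range, Set.mem_Iio] at hi hj
    simp only [hfU, Prod.mk.injEq] at hij
    omega
  have hdisj : Disjoint (MW.image fW) ((Finset.range u).image fU) := by
    rw [Finset.disjoint_left]
    intro p hp hp'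
    rw [Finset.mem_image] at hp hp'
    obtain ⟨q, hq, rfl⟩ := hp
    obtain ⟨i, hi, he⟩ := hp'
    have h1 := hmemW q hq
    rw [Finset.mem_range] at hi
    obtain ⟨q1, q2⟩ := q
    simp only [hfW, hfU, Prod.mk.injEq] at *
    omega
  have hcard : M.card = MW.card + u := by
    rw [hMdef, Finset.card_union_of_disjoint hdisj, Finset.card_image_of_injOn hinjW,
      Finset.card_image_of_injOn hinjU, Finset.card_range]
  have := ell_le hMnc
  rw [hVlen, hcard] at this
  omega


lemma ellFG_le {g : FreeGroup (Fin k)} {X : List (Letter k)} (hX : FreeGroup.mk X = g) :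
    ellFG g ≤ ell X := Nat.sInf_le ⟨X, hX, rfl⟩

lemma ellFG_spec (g : FreeGroup (Fin k)) :
    ∃ X, FreeGroup.mk X = g ∧ ellFG g = ell X := by
  have : ellFG g ∈ {m | ∃ X : List (Letter k), FreeGroup.mk X = g ∧ m = ell X} :=
    Nat.sInf_mem ⟨ell (FreeGroup.toWord g), FreeGroup.toWord g, FreeGroup.mk_toWord, rfl⟩
  exact this

lemma ell_nil : ell ([] : List (Letter k)) = 0 := by
  simpa using ell_le (isNC_empty ([] : List (Letter k)))

lemma ellFG_one : ellFG (1 : FreeGroup (Fin k)) = 0 := by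
  have h := ellFG_le (g := (1 : FreeGroup (Fin k))) (X := []) FreeGroup.one_eq_mk.symm
  rw [ell_nil] at h
  omega

lemma ellFG_mul (g h : FreeGroup (Fin k)) : ellFG (g * h) ≤ ellFG g + ellFG h := by
  obtain ⟨X, hX, hgX⟩ := ellFG_spec g
  obtain ⟨Y, hY, hgY⟩ := ellFG_spec h
  have hmk : FreeGroup.mk (X ++ Y) = g * h := by rw [← FreeGroup.mul_mk, hX, hY]
  calc ellFG (g * h) ≤ ell (X ++ Y) := ellFG_le hmk
    _ ≤ ell X + ell Y := ell_append X Y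
    _ = ellFG g + ellFG h := by rw [← hgX, ← hgY]

lemma ellFG_inv (g : FreeGroup (Fin k)) : ellFG g⁻¹ = ellFG g := by
  have key : ∀ g : FreeGroup (Fin k), ellFG g⁻¹ ≤ ellFG g := by
    intro g
    obtain ⟨X, hX, hg⟩ := ellFG_spec g
    have hmk : FreeGroup.mk (FreeGroup.invRev X) = g⁻¹ := by rw [← FreeGroup.inv_mk, hX]
    calc ellFG g⁻¹ ≤ ell (FreeGroup.invRev X) := ellFG_le hmk
      _ ≤ ell X := ell_invRev X
      _ = ellFG g := hg.symm
  exact le_antisymm (key g) (by simpa using key g⁻¹)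

lemma ellFG_conj (g h : FreeGroup (Fin k)) : ellFG (g * h * g⁻¹) = ellFG h := by
  have key : ∀ g h : FreeGroup (Fin k), ellFG (g * h * g⁻¹) ≤ ellFG h := by
    intro g h
    obtain ⟨W, hW, hh⟩ := ellFG_spec h
    have hU : FreeGroup.mk (FreeGroup.toWord g) = g := FreeGroup.mk_toWord
    set U := FreeGroup.toWord g with hUdef
    have hmk : FreeGroup.mk (U ++ W ++ FreeGroup.invRev U) = g * h * g⁻¹ := by
      rw [← FreeGroup.mul_mk, ← FreeGroup.mul_mk, ← FreeGroup.inv_mk, hU, hW]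
    calc ellFG (g * h * g⁻¹) ≤ ell (U ++ W ++ FreeGroup.invRev U) := ellFG_le hmk
      _ ≤ ell W := ell_conj U W
      _ = ellFG h := hh.symm
  have h2 := key g⁻¹ (g * h * g⁻¹)
  rw [show g⁻¹ * (g * h * g⁻¹) * g⁻¹⁻¹ = h by group] at h2
  exact le_antisymm (key g h) h2

lemma ellFG_pos {g : FreeGroup (Fin k)} (hg : g ≠ 1) : 0 < ellFG g := by
  rcases Nat.eq_zero_or_pos (ellFG g) with h0 | h
  · exfalso
    obtain ⟨X, hX, he⟩ := ellFG_spec g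
    obtain ⟨M, hM, hE⟩ := ell_spec X
    have h2 := two_card_le hM
    have hc : X.length = 2 * M.card := by omega
    exact hg (by rw [← hX]; exact complete_eq_one X.length X M le_rfl hM hc)
  · exact h

end NCAux

/-- Every conjugacy-invariant length function bounded by 1 on the generators is dominated
by `ℓ_NC`; consequently `ℓ_NC` is the maximal such length function. -/
theorem ellFG_maximal (k : ℕ) :
    (∀ l : ConjInvLength (FreeGroup (Fin k)),
      (∀ i : Fin k, l.toFun (FreeGroup.of i) ≤ 1) →
      ∀ g : FreeGroup (Fin k), l.toFun g ≤ (ellFG g : ℝ)) ∧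
    (∃ lNC : ConjInvLength (FreeGroup (Fin k)),
      (∀ g : FreeGroup (Fin k), lNC.toFun g = (ellFG g : ℝ)) ∧
      (∀ i : Fin k, lNC.toFun (FreeGroup.of i) ≤ 1)) := by
  constructor
  · intro l hl g
    obtain ⟨X, hX, hg⟩ := NCAux.ellFG_spec g
    obtain ⟨M, hM, hE⟩ := NCAux.ell_spec X
    have h2 := NCAux.two_card_le hM
    have hA := NCAux.lemA l hl X.length X M le_rfl hM
    rw [hg, hE, ← hX]
    have hcast : ((X.length - 2 * M.card : ℕ) : ℝ) = (X.length : ℝ) - 2 * M.card := by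
      rw [Nat.cast_sub h2]
      push_cast
      ring
    rw [hcast]
    exact hA
  · refine ⟨⟨fun g => (ellFG g : ℝ), fun g => Nat.cast_nonneg _, ?_, ?_, ?_, ?_, ?_⟩,
      fun g => rfl, ?_⟩
    · simp only [NCAux.ellFG_one, Nat.cast_zero]
    · intro g hg
      exact_mod_cast Nat.cast_pos.mpr (NCAux.ellFG_pos hg)
    · intro g
      exact_mod_cast congrArg (Nat.cast : ℕ → ℝ) (NCAux.ellFG_inv g)
    · intro g h
      exact_mod_cast NCAux.ellFG_mul g h
    · intro g h
      exact_mod_cast congrArg (Nat.cast : ℕ → ℝ) (NCAux.ellFG_conj g h)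
    · intro i
      have h1 : ellFG (FreeGroup.of i) ≤ ell [((i : Fin k), true)] :=
        NCAux.ellFG_le rfl
      have h2 : ell [((i : Fin k), true)] ≤ 1 := by
        simpa using NCAux.ell_le (NCAux.isNC_empty [((i : Fin k), true)])
      show ((ellFG (FreeGroup.of i) : ℕ) : ℝ) ≤ 1
      exact_mod_cast le_trans h1 h2
end

section
/- λ_k → 1 as k → ∞: the asymptotic expected unmatched fraction for random words over 2k letters tends to 1. -/
open scoped BigOperators

namespace NC

def Good (M : Finset (ℕ × ℕ)) : Prop :=
  (∀ p ∈ M, p.1 < p.2) ∧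
  (∀ p ∈ M, ∀ q ∈ M, p ≠ q → p.1 ≠ q.1 ∧ p.1 ≠ q.2 ∧ p.2 ≠ q.1 ∧ p.2 ≠ q.2) ∧
  (∀ p ∈ M, ∀ q ∈ M, ¬ (p.1 < q.1 ∧ q.1 < p.2 ∧ p.2 < q.2))

lemma good_of_nc {k : ℕ} {X : List (Letter k)} {M : Finset (ℕ × ℕ)}
    (h : IsNCMatching X M) : Good M :=
  ⟨fun p hp => (h.1 p hp).1, h.2.1, h.2.2⟩

lemma Good.subset {M M' : Finset (ℕ × ℕ)} (h : Good M) (hsub : M' ⊆ M) : Good M' :=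
  ⟨fun p hp => h.1 p (hsub hp), fun p hp q hq => h.2.1 p (hsub hp) q (hsub hq),
   fun p hp q hq => h.2.2 p (hsub hp) q (hsub hq)⟩

lemma nc_subset {k : ℕ} {X : List (Letter k)} {M M' : Finset (ℕ × ℕ)}
    (h : IsNCMatching X M) (hsub : M' ⊆ M) : IsNCMatching X M' :=
  ⟨fun p hp => h.1 p (hsub hp), fun p hp q hq => h.2.1 p (hsub hp) q (hsub hq),
   fun p hp q hq => h.2.2 p (hsub hp) q (hsub hq)⟩

lemma erase_image_fst {M : Finset (ℕ × ℕ)} (hM : Good M) {p : ℕ × ℕ} (hp : p ∈ M) :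
    (M.erase p).image Prod.fst = (M.image Prod.fst).erase p.1 := by
  ext a
  simp only [Finset.mem_image, Finset.mem_erase]
  constructor
  · rintro ⟨q, ⟨hqp, hq⟩, rfl⟩
    exact ⟨(hM.2.1 q hq p hp hqp).1, q, hq, rfl⟩
  · rintro ⟨ha, q, hq, rfl⟩
    refine ⟨q, ⟨?_, hq⟩, rfl⟩
    rintro rfl; exact ha rfl

lemma erase_image_snd {M : Finset (ℕ × ℕ)} (hM : Good M) {p : ℕ × ℕ} (hp : p ∈ M) :
    (M.erase p).image Prod.snd = (M.image Prod.snd).erase p.2 := by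
  ext a
  simp only [Finset.mem_image, Finset.mem_erase]
  constructor
  · rintro ⟨q, ⟨hqp, hq⟩, rfl⟩
    exact ⟨(hM.2.1 q hq p hp hqp).2.2.2, q, hq, rfl⟩
  · rintro ⟨ha, q, hq, rfl⟩
    refine ⟨q, ⟨?_, hq⟩, rfl⟩
    rintro rfl; exact ha rfl

/-- A noncrossing matching is determined by its sets of openers and closers. -/
lemma uniq : ∀ (N : ℕ) (M M' : Finset (ℕ × ℕ)), M.card ≤ N → Good M → Good M' →
    M.image Prod.fst = M'.image Prod.fst → M.image Prod.snd = M'.image Prod.snd →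
    M = M' := by
  intro N
  induction N with
  | zero =>
    intro M M' hcard _ _ _ hsnd
    have hM : M = ∅ := Finset.card_eq_zero.mp (Nat.le_zero.mp hcard)
    subst hM
    simp only [Finset.image_empty] at hsnd
    exact (Finset.image_eq_empty.mp hsnd.symm).symm
  | succ N ih =>
    intro M M' hcard hM hM' hfst hsnd
    rcases eq_or_ne M ∅ with rfl | hne
    · simp only [Finset.image_empty] at hsnd
      exact (Finset.image_eq_empty.mp hsnd.symm).symm
    have hMne : M.Nonempty := Finset.nonempty_iff_ne_empty.mpr hne
    have hsne : (M.image Prod.snd).Nonempty := hMne.image _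
    set j := (M.image Prod.snd).min' hsne with hj
    obtain ⟨p, hp, hpj⟩ := Finset.mem_image.mp ((M.image Prod.snd).min'_mem hsne)
    have hj' : j ∈ M'.image Prod.snd := by rw [← hsnd]; exact (M.image Prod.snd).min'_mem hsne
    obtain ⟨p', hp', hpj'⟩ := Finset.mem_image.mp hj'
    -- minimality of j over closers of M and M'
    have hjmin : ∀ q ∈ M, j ≤ q.2 := fun q hq =>
      (M.image Prod.snd).min'_le _ (Finset.mem_image_of_mem _ hq)
    have hjmin' : ∀ q ∈ M', j ≤ q.2 := fun q hq => by
      refine (M.image Prod.snd).min'_le _ ?_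
      rw [hsnd]; exact Finset.mem_image_of_mem _ hq
    -- p.1 = p'.1
    have hkey : p.1 = p'.1 := by
      rcases lt_trichotomy p.1 p'.1 with h | h | h
      · -- p'.1 is an opener of M
        have : p'.1 ∈ M.image Prod.fst := by rw [hfst]; exact Finset.mem_image_of_mem _ hp'
        obtain ⟨q, hq, hq1⟩ := Finset.mem_image.mp this
        have hq2j : q.2 ≠ j := by
          intro hqj
          have : q = p := by
            by_contra hqp
            exact (hM.2.1 q hq p hp hqp).2.2.2 (hqj.trans hpj.symm)
          subst this
          omega
        have hq2 : j < q.2 := lt_of_le_of_ne (hjmin q hq) (Ne.symm hq2j)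
        have hlt : p'.1 < j := by have := hM'.1 p' hp'; omega
        exact absurd ⟨hq1 ▸ h, by omega, by omega⟩ (hM.2.2 p hp q hq)
      · exact h
      · have : p.1 ∈ M'.image Prod.fst := by rw [← hfst]; exact Finset.mem_image_of_mem _ hp
        obtain ⟨q, hq, hq1⟩ := Finset.mem_image.mp this
        have hq2j : q.2 ≠ j := by
          intro hqj
          have : q = p' := by
            by_contra hqp
            exact (hM'.2.1 q hq p' hp' hqp).2.2.2 (hqj.trans hpj'.symm)
          subst this
          omega
        have hq2 : j < q.2 := lt_of_le_of_ne (hjmin' q hq) (Ne.symm hq2j)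
        have hlt : p.1 < j := by have := hM.1 p hp; omega
        exact absurd ⟨hq1 ▸ h, by omega, by omega⟩ (hM'.2.2 p' hp' q hq)
    have hpp' : p = p' := Prod.ext hkey (hpj.trans hpj'.symm)
    subst hpp'
    have hcard' : (M.erase p).card ≤ N := by
      have := Finset.card_erase_of_mem hp
      omega
    have := ih (M.erase p) (M'.erase p) hcard' (hM.subset (Finset.erase_subset _ _))
      (hM'.subset (Finset.erase_subset _ _))
      (by rw [erase_image_fst hM hp, erase_image_fst hM' hp', hfst])
      (by rw [erase_image_snd hM hp, erase_image_snd hM' hp', hsnd])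
    have h1 : M = insert p (M.erase p) := (Finset.insert_erase hp).symm
    have h2 : M' = insert p (M'.erase p) := (Finset.insert_erase hp').symm
    rw [h1, h2, this]

lemma bar_bar {k : ℕ} (x : Letter k) : Letter.bar (Letter.bar x) = x := by
  simp [Letter.bar]

lemma nc_empty {k : ℕ} (X : List (Letter k)) : IsNCMatching X ∅ := by
  refine ⟨?_, ?_, ?_⟩ <;> simp

lemma ell_le_length {k : ℕ} (X : List (Letter k)) : ell X ≤ X.length :=
  Nat.sInf_le ⟨∅, nc_empty X, by simp⟩

lemma ell_set_nonempty {k : ℕ} (X : List (Letter k)) :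
    {m | ∃ M : Finset (ℕ × ℕ), IsNCMatching X M ∧ m = X.length - 2 * M.card}.Nonempty :=
  ⟨X.length, ∅, nc_empty X, by simp⟩

lemma length_le_ell {k : ℕ} {X : List (Letter k)} {t : ℕ}
    (h : ∀ M, IsNCMatching X M → M.card ≤ t) :
    X.length ≤ ell X + 2 * t := by
  obtain ⟨M, hM, hm⟩ := Nat.sInf_mem (ell_set_nonempty X)
  have hc := h M hM
  rw [ell, hm]
  omega

section Counting

variable {k n m : ℕ}

open Classical in
/-- label function determined by a matching: 1 = closer, 0 = opener, 2 = unmatched -/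
noncomputable def labfun (M : Finset (ℕ × ℕ)) (i : ℕ) : Fin 3 :=
  if ∃ p ∈ M, p.2 = i then 1 else if ∃ p ∈ M, p.1 = i then 0 else 2

lemma labfun_eq_one_iff {M : Finset (ℕ × ℕ)} (i : ℕ) :
    labfun M i = 1 ↔ ∃ p ∈ M, p.2 = i := by
  rw [labfun]
  split_ifs with h1 h2 <;> simp_all

lemma labfun_eq_zero_iff {M : Finset (ℕ × ℕ)} (hM : Good M) (i : ℕ) :
    labfun M i = 0 ↔ ∃ p ∈ M, p.1 = i := by
  rw [labfun]
  split_ifs with h1 h2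
  · obtain ⟨p, hp, hpi⟩ := h1
    constructor
    · intro h; exact absurd h (by decide)
    · rintro ⟨q, hq, hqi⟩
      exfalso
      rcases eq_or_ne q p with rfl | hqp
      · have := hM.1 q hq; omega
      · exact (hM.2.1 q hq p hp hqp).2.1 (by omega)
  · simp [h2]
  · simp [h2]

open Classical in
noncomputable def pick (k n m : ℕ) (w : Fin n → Letter k) : Finset (ℕ × ℕ) :=
  if h : ∃ M, IsNCMatching (List.ofFn w) M ∧ M.card = m then h.choose else ∅

lemma pick_spec {w : Fin n → Letter k}
    (h : ∃ M, IsNCMatching (List.ofFn w) M ∧ m ≤ M.card) :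
    IsNCMatching (List.ofFn w) (pick k n m w) ∧ (pick k n m w).card = m := by
  obtain ⟨M, hM, hc⟩ := h
  obtain ⟨M', hsub, hc'⟩ := Finset.exists_subset_card_eq hc
  have hex : ∃ M, IsNCMatching (List.ofFn w) M ∧ M.card = m := ⟨M', nc_subset hM hsub, hc'⟩
  rw [pick, dif_pos hex]
  exact hex.choose_spec

noncomputable def lab (k n m : ℕ) (w : Fin n → Letter k) : Fin n → Fin 3 :=
  fun i => labfun (pick k n m w) i

lemma mem_pick_lt {w : Fin n → Letter k}
    (hnc : IsNCMatching (List.ofFn w) (pick k n m w)) {p : ℕ × ℕ}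
    (hp : p ∈ pick k n m w) : p.1 < p.2 ∧ p.2 < n := by
  have := (hnc.1 p hp).1
  have := (hnc.1 p hp).2.1
  simp only [List.length_ofFn] at *
  omega

/-- the image of `Prod.snd` is determined by the label -/
lemma snd_image_eq {w w' : Fin n → Letter k}
    (hnc : IsNCMatching (List.ofFn w) (pick k n m w))
    (hnc' : IsNCMatching (List.ofFn w') (pick k n m w'))
    (hlab : lab k n m w = lab k n m w') :
    (pick k n m w).image Prod.snd = (pick k n m w').image Prod.snd := by
  ext a
  simp only [Finset.mem_image]
  constructor
  · rintro ⟨p, hp, rfl⟩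
    have hlt := (mem_pick_lt hnc hp).2
    have h1 : lab k n m w ⟨p.2, hlt⟩ = 1 := (labfun_eq_one_iff _).mpr ⟨p, hp, rfl⟩
    rw [hlab] at h1
    obtain ⟨q, hq, hq2⟩ := (labfun_eq_one_iff _).mp h1
    exact ⟨q, hq, hq2⟩
  · rintro ⟨p, hp, rfl⟩
    have hlt := (mem_pick_lt hnc' hp).2
    have h1 : lab k n m w' ⟨p.2, hlt⟩ = 1 := (labfun_eq_one_iff _).mpr ⟨p, hp, rfl⟩
    rw [← hlab] at h1
    obtain ⟨q, hq, hq2⟩ := (labfun_eq_one_iff _).mp h1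
    exact ⟨q, hq, hq2⟩

lemma fst_image_eq {w w' : Fin n → Letter k}
    (hnc : IsNCMatching (List.ofFn w) (pick k n m w))
    (hnc' : IsNCMatching (List.ofFn w') (pick k n m w'))
    (hlab : lab k n m w = lab k n m w') :
    (pick k n m w).image Prod.fst = (pick k n m w').image Prod.fst := by
  ext a
  simp only [Finset.mem_image]
  constructor
  · rintro ⟨p, hp, rfl⟩
    have hlt := (mem_pick_lt hnc hp)
    have h1 : lab k n m w ⟨p.1, by omega⟩ = 0 :=
      (labfun_eq_zero_iff (good_of_nc hnc) _).mpr ⟨p, hp, rfl⟩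
    rw [hlab] at h1
    obtain ⟨q, hq, hq2⟩ := (labfun_eq_zero_iff (good_of_nc hnc') _).mp h1
    exact ⟨q, hq, hq2⟩
  · rintro ⟨p, hp, rfl⟩
    have hlt := (mem_pick_lt hnc' hp)
    have h1 : lab k n m w' ⟨p.1, by omega⟩ = 0 :=
      (labfun_eq_zero_iff (good_of_nc hnc') _).mpr ⟨p, hp, rfl⟩
    rw [← hlab] at h1
    obtain ⟨q, hq, hq2⟩ := (labfun_eq_zero_iff (good_of_nc hnc) _).mp h1
    exact ⟨q, hq, hq2⟩

lemma match_eq {w : Fin n → Letter k}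
    (hnc : IsNCMatching (List.ofFn w) (pick k n m w)) {p : ℕ × ℕ}
    (hp : p ∈ pick k n m w) :
    w ⟨p.2, (mem_pick_lt hnc hp).2⟩ =
      Letter.bar (w ⟨p.1, by have := mem_pick_lt hnc hp; omega⟩) := by
  have h := (hnc.1 p hp).2.2
  have h1 := (mem_pick_lt hnc hp).1
  have h2 := (mem_pick_lt hnc hp).2
  rw [List.getElem?_ofFn, List.getElem?_ofFn] at h
  rw [dif_pos (by omega : p.1 < n), dif_pos h2] at h
  simp only [Option.map_some] at h
  have := congrArg Letter.bar (Option.some.inj h)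
  rw [bar_bar] at this
  exact this.symm

/-- Key injectivity: label + values off closers determine the word. -/
lemma inj_key {w w' : Fin n → Letter k}
    (hw : ∃ M, IsNCMatching (List.ofFn w) M ∧ m ≤ M.card)
    (hw' : ∃ M, IsNCMatching (List.ofFn w') M ∧ m ≤ M.card)
    (hlab : lab k n m w = lab k n m w')
    (hmask : ∀ i, lab k n m w i ≠ 1 → w i = w' i) : w = w' := by
  have hnc := (pick_spec hw).1
  have hnc' := (pick_spec hw').1
  have hcard := (pick_spec hw).2
  have hMeq : pick k n m w = pick k n m w' :=
    uniq (pick k n m w).card _ _ le_rfl (good_of_nc hnc) (good_of_nc hnc')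
      (fst_image_eq hnc hnc' hlab) (snd_image_eq hnc hnc' hlab)
  funext i
  by_cases hi : lab k n m w i = 1
  · obtain ⟨p, hp, hp2⟩ := (labfun_eq_one_iff (M := pick k n m w) (i : ℕ)).mp hi
    have hlt := mem_pick_lt hnc hp
    have hi2 : i = ⟨p.2, hlt.2⟩ := by
      apply Fin.ext; simp [hp2.symm]
    have hopener : lab k n m w ⟨p.1, by omega⟩ ≠ 1 := by
      rw [show lab k n m w ⟨p.1, by omega⟩ = 0 from
        (labfun_eq_zero_iff (good_of_nc hnc) _).mpr ⟨p, hp, rfl⟩]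
      decide
    have h1 := match_eq hnc hp
    have h2 := match_eq (m := m) hnc' (hMeq ▸ hp)
    rw [hi2, h1, h2, hmask _ hopener]
  · exact hmask i hi

open Classical in
lemma closers_card {w : Fin n → Letter k}
    (hw : ∃ M, IsNCMatching (List.ofFn w) M ∧ m ≤ M.card) :
    (Finset.univ.filter (fun i : Fin n => lab k n m w i = 1)).card = m := by
  have hnc := (pick_spec hw).1
  have hgood := good_of_nc hnc
  have key : (Finset.univ.filter (fun i : Fin n => lab k n m w i = 1)).card
      = (pick k n m w).card := by
    refine (Finset.card_bij (fun p hp => (⟨p.2, (mem_pick_lt hnc hp).2⟩ : Fin n)) ?_ ?_ ?_).symm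
    · intro p hp
      simp only [Finset.mem_filter, Finset.mem_univ, true_and]
      exact (labfun_eq_one_iff _).mpr ⟨p, hp, rfl⟩
    · intro p hp q hq h
      have h2 : p.2 = q.2 := congrArg Fin.val h
      by_contra hpq
      exact (hgood.2.1 p hp q hq hpq).2.2.2 h2
    · intro i hi
      simp only [Finset.mem_filter, Finset.mem_univ, true_and] at hi
      obtain ⟨p, hp, hp2⟩ := (labfun_eq_one_iff _).mp hi
      exact ⟨p, hp, Fin.ext hp2⟩
  rw [key, (pick_spec hw).2]

open Classical in
lemma card_bad_le (k n m : ℕ) :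
    (Finset.univ.filter (fun w : Fin n → Letter k =>
      ∃ M, IsNCMatching (List.ofFn w) M ∧ m ≤ M.card)).card ≤ (2*k)^(n-m) * 3^n := by
  set B := Finset.univ.filter (fun w : Fin n → Letter k =>
      ∃ M, IsNCMatching (List.ofFn w) M ∧ m ≤ M.card) with hB
  have hfib : ∀ l ∈ B.image (lab k n m),
      (B.filter (fun w => lab k n m w = l)).card ≤ (2*k)^(n-m) := by
    intro l hl
    obtain ⟨w₀, hw₀, hw₀l⟩ := Finset.mem_image.mp hl
    have hw₀B : ∃ M, IsNCMatching (List.ofFn w₀) M ∧ m ≤ M.card :=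
      (Finset.mem_filter.mp hw₀).2
    have hcl : (Finset.univ.filter (fun i : Fin n => l i = 1)).card = m := by
      rw [← hw₀l]; exact closers_card hw₀B
    have hcard2 : Fintype.card {i : Fin n // ¬ (l i = 1)} = n - m := by
      rw [Fintype.card_subtype]
      have := Finset.card_filter_add_card_filter_not
        (s := (Finset.univ : Finset (Fin n))) (p := fun i => l i = 1)
      simp only [Finset.card_univ, Fintype.card_fin] at this
      omega
    have hinj : Set.InjOn
        (fun (w : Fin n → Letter k) => fun j : {i : Fin n // ¬ (l i = 1)} => w j.1)
        (B.filter (fun w => lab k n m w = l)) := by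
      intro w hwmem w' hw'mem heq
      simp only [Finset.coe_filter, Set.mem_setOf_eq, hB, Finset.mem_filter,
        Finset.mem_univ, true_and] at hwmem hw'mem
      refine inj_key hwmem.1 hw'mem.1 (hwmem.2.trans hw'mem.2.symm) ?_
      intro i hi
      rw [hwmem.2] at hi
      exact congrFun heq ⟨i, hi⟩
    have hle := Finset.card_le_card_of_injOn _ (fun w _ => Finset.mem_univ _) hinj
    calc (B.filter (fun w => lab k n m w = l)).card
        ≤ (Finset.univ : Finset ({i : Fin n // ¬ (l i = 1)} → Letter k)).card := hle
      _ = (2*k)^(n-m) := by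
          rw [Finset.card_univ, Fintype.card_fun, hcard2]
          congr 1
          show Fintype.card (Fin k × Bool) = 2*k
          simp [mul_comm]
  have h1 := Finset.card_le_mul_card_image B ((2*k)^(n-m)) hfib
  have h2 : (B.image (lab k n m)).card ≤ 3^n := by
    have := Finset.card_le_univ (B.image (lab k n m))
    rwa [Fintype.card_fun, Fintype.card_fin, Fintype.card_fin] at this
  calc B.card ≤ (2*k)^(n-m) * (B.image (lab k n m)).card := h1
    _ ≤ (2*k)^(n-m) * 3^n := Nat.mul_le_mul_left _ h2

end Counting

open Classical in
lemma sum_ell_ge (k n m : ℕ) (hm : 1 ≤ m) :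
    ((n + 2 - 2*m : ℕ) : ℝ) * ((2*(k:ℝ))^n - (2*(k:ℝ))^(n-m) * 3^n)
      ≤ ∑ w : Fin n → Letter k, (ell (List.ofFn w) : ℝ) := by
  set c := n + 2 - 2*m with hc
  set bad := fun w : Fin n → Letter k => ∃ M, IsNCMatching (List.ofFn w) M ∧ m ≤ M.card
    with hbad
  set B := Finset.univ.filter bad with hBdef
  set G := Finset.univ.filter (fun w => ¬ bad w) with hGdef
  have hGell : ∀ w ∈ G, (c : ℝ) ≤ (ell (List.ofFn w) : ℝ) := by
    intro w hwG
    have hnb : ¬ bad w := (Finset.mem_filter.mp hwG).2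
    have hall : ∀ M, IsNCMatching (List.ofFn w) M → M.card ≤ m - 1 := by
      intro M hM
      by_contra h
      exact hnb ⟨M, hM, by omega⟩
    have hlen := length_le_ell hall
    rw [List.length_ofFn] at hlen
    exact_mod_cast (by omega : c ≤ ell (List.ofFn w))
  have hsplit : B.card + G.card = (2*k)^n := by
    have h := Finset.card_filter_add_card_filter_not
      (s := (Finset.univ : Finset (Fin n → Letter k))) (p := bad)
    rw [Finset.card_univ, Fintype.card_fun, Fintype.card_fin] at h
    have hL : Fintype.card (Letter k) = 2*k := by
      show Fintype.card (Fin k × Bool) = 2*k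
      simp [mul_comm]
    rw [hL] at h
    exact h
  have hBle : B.card ≤ (2*k)^(n-m) * 3^n := card_bad_le k n m
  have hGc : (c : ℝ) * ((2*(k:ℝ))^n - (2*(k:ℝ))^(n-m) * 3^n) ≤ (c:ℝ) * G.card := by
    apply mul_le_mul_of_nonneg_left _ (Nat.cast_nonneg c)
    have h1 : ((B.card : ℝ)) + G.card = (2*(k:ℝ))^n := by
      exact_mod_cast congrArg (Nat.cast : ℕ → ℝ) hsplit
    have h2 : (B.card : ℝ) ≤ (2*(k:ℝ))^(n-m) * 3^n := by
      exact_mod_cast Nat.cast_le.mpr hBle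
    push_cast at h1 h2 ⊢
    linarith
  calc (c : ℝ) * ((2*(k:ℝ))^n - (2*(k:ℝ))^(n-m) * 3^n)
      ≤ (c:ℝ) * G.card := hGc
    _ = ∑ _w ∈ G, (c : ℝ) := by rw [Finset.sum_const, nsmul_eq_mul, mul_comm]
    _ ≤ ∑ w ∈ G, (ell (List.ofFn w) : ℝ) := Finset.sum_le_sum hGell
    _ ≤ ∑ w : Fin n → Letter k, (ell (List.ofFn w) : ℝ) :=
        Finset.sum_le_sum_of_subset_of_nonneg (Finset.subset_univ G)
          (fun w _ _ => Nat.cast_nonneg _)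

lemma Lk_div_ge {k n a T : ℕ} (ha : 2 ≤ a) (hT : 1 ≤ T) (hn : 0 < n)
    (hkT : 3^a * T ≤ 2*k) :
    (1 - 2/(a:ℝ)) * (1 - 1/(T:ℝ)) ≤ Lk k n / n := by
  have hpos : 0 < 3^a * T := Nat.mul_pos (Nat.pow_pos (n := a) (by norm_num)) hT
  have hk : 0 < k := by omega
  set m := n / a + 1 with hm
  have hdm : a * m = a * (n/a) + a := by rw [hm]; ring
  have hdam := Nat.div_add_mod n a
  have hmod := Nat.mod_lt n (show 0 < a by omega)
  have hman : n + 1 ≤ a * m := by omega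
  have hd2 : n / a ≤ n / 2 := Nat.div_le_div_left ha (by norm_num)
  have hd2' : n / 2 < n := Nat.div_lt_self hn (by norm_num)
  have hmn : m ≤ n := by omega
  have h2dn : 2 * (n/a) ≤ n := by omega
  have hc : n + 2 - 2*m = n - 2*(n/a) := by omega
  -- ℕ power inequality
  have hpow : 3^n * T ≤ (2*k)^m := by
    calc 3^n * T ≤ 3^(a*m) * T^m := by
          refine Nat.mul_le_mul ?_ ?_
          · exact Nat.pow_le_pow_right (by norm_num) (by omega)
          · exact Nat.le_self_pow (by omega) T
      _ = (3^a * T)^m := by rw [mul_pow, ← pow_mul]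
      _ ≤ (2*k)^m := Nat.pow_le_pow_left hkT m
  have hnR : (0:ℝ) < n := by exact_mod_cast hn
  have hPR : (0:ℝ) < (2*(k:ℝ))^n := by positivity
  rw [le_div_iff₀ hnR, Lk, le_div_iff₀ hPR]
  refine le_trans ?_ (sum_ell_ge k n m (by omega))
  set A := (2*(k:ℝ))^n with hA
  set A' := (2*(k:ℝ))^(n-m) with hA'
  have hTR : (0:ℝ) < T := by exact_mod_cast hT
  have haR : (0:ℝ) < a := by positivity
  have f1 : (1 - 2/(a:ℝ)) * n ≤ ((n + 2 - 2*m : ℕ) : ℝ) := by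
    rw [hc]
    have hcast : ((n - 2*(n/a) : ℕ) : ℝ) = (n:ℝ) - 2*((n/a : ℕ) : ℝ) := by
      push_cast [Nat.cast_sub h2dn]
      ring
    rw [hcast]
    have hdiv : ((n/a : ℕ) : ℝ) ≤ (n:ℝ)/(a:ℝ) := Nat.cast_div_le
    have : (1 - 2/(a:ℝ)) * n = (n:ℝ) - 2*((n:ℝ)/(a:ℝ)) := by field_simp
    rw [this]
    linarith
  have f2 : (1 - 1/(T:ℝ)) * A ≤ A - A' * 3^n := by
    have hpowR : (3:ℝ)^n * T ≤ (2*(k:ℝ))^m := by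
      have := (Nat.cast_le (α := ℝ)).mpr hpow
      push_cast at this
      convert this using 2 <;> push_cast <;> ring
    have hA'nn : (0:ℝ) ≤ A' := by positivity
    have hAE : A = A' * (2*(k:ℝ))^m := by
      rw [hA, hA', ← pow_add]
      congr 1
      omega
    have h3 : A' * 3^n * T ≤ A := by
      rw [hAE]
      calc A' * 3^n * T = A' * ((3:ℝ)^n * T) := by ring
        _ ≤ A' * (2*(k:ℝ))^m := by
            exact mul_le_mul_of_nonneg_left hpowR hA'nn
    have : A' * 3^n ≤ A / T := by
      rw [le_div_iff₀ hTR]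
      linarith
    have hAT : (1 - 1/(T:ℝ)) * A = A - A/T := by field_simp
    linarith [hAT]
  have g1 : (0 : ℝ) ≤ (1 - 1/(T:ℝ)) * A := by
    have : 1/(T:ℝ) ≤ 1 := by
      rw [div_le_one hTR]; exact_mod_cast hT
    have := hPR.le
    nlinarith
  have key := mul_le_mul f1 f2 g1 (Nat.cast_nonneg _)
  calc (1 - 2/(a:ℝ)) * (1 - 1/(T:ℝ)) * n * A
      = ((1 - 2/(a:ℝ)) * n) * ((1 - 1/(T:ℝ)) * A) := by ring
    _ ≤ ((n + 2 - 2*m : ℕ) : ℝ) * (A - A' * 3^n) := key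

lemma Lk_div_nonneg (k n : ℕ) : 0 ≤ Lk k n / n := by
  apply div_nonneg _ (Nat.cast_nonneg n)
  apply div_nonneg _ (by positivity)
  exact Finset.sum_nonneg fun w _ => Nat.cast_nonneg _

lemma bddBelow_Lk (k : ℕ) : BddBelow (Set.range fun n : ℕ+ => Lk k n / (n : ℕ)) := by
  refine ⟨0, ?_⟩
  rintro x ⟨n, rfl⟩
  exact Lk_div_nonneg k n

lemma Lk_le (hk : 0 < k) (n : ℕ) : Lk k n ≤ n := by
  have hPR : (0:ℝ) < (2*(k:ℝ))^n := by positivity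
  rw [Lk, div_le_iff₀ hPR]
  calc ∑ w : Fin n → Letter k, (ell (List.ofFn w) : ℝ)
      ≤ ∑ _w : Fin n → Letter k, (n : ℝ) := by
        refine Finset.sum_le_sum fun w _ => ?_
        have := ell_le_length (List.ofFn w)
        rw [List.length_ofFn] at this
        exact_mod_cast this
    _ = (Fintype.card (Fin n → Letter k) : ℝ) * n := by
        rw [Finset.sum_const, nsmul_eq_mul, Finset.card_univ]
    _ = (n : ℝ) * (2*(k:ℝ))^n := by
        rw [Fintype.card_fun, Fintype.card_fin]
        have hL : Fintype.card (Letter k) = 2*k := by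
          show Fintype.card (Fin k × Bool) = 2*k
          simp [mul_comm]
        rw [hL]
        push_cast
        ring

lemma lambda_le_one (hk : 0 < k) : lambda k ≤ 1 := by
  have h := ciInf_le (bddBelow_Lk k) (1 : ℕ+)
  refine h.trans ?_
  have := Lk_le hk 1
  simp only [PNat.one_coe, Nat.cast_one] at this ⊢
  simpa using this

lemma lambda_ge {k a T : ℕ} (ha : 2 ≤ a) (hT : 1 ≤ T) (hkT : 3^a * T ≤ 2*k) :
    (1 - 2/(a:ℝ)) * (1 - 1/(T:ℝ)) ≤ lambda k :=
  le_ciInf fun n => Lk_div_ge ha hT n.2 hkT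

end NC

/-- `λ_k → 1` as `k → ∞`. -/
theorem lambda_tendsto_one :
    Filter.Tendsto (fun k : ℕ => lambda k) Filter.atTop (nhds 1) := by
  rw [Metric.tendsto_atTop]
  intro ε hε
  set a := ⌈4/ε⌉₊ + 2 with hadef
  set T := ⌈2/ε⌉₊ + 1 with hTdef
  have ha : 2 ≤ a := by omega
  have hT : 1 ≤ T := by omega
  have haR : (0:ℝ) < a := by positivity
  have hTR : (0:ℝ) < T := by positivity
  have haε : 2/(a:ℝ) < ε/2 := by
    rw [div_lt_div_iff₀ haR (by norm_num)]
    have h1 : 4/ε ≤ (⌈4/ε⌉₊ : ℝ) := Nat.le_ceil _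
    have h2 : (a:ℝ) = (⌈4/ε⌉₊:ℝ) + 2 := by rw [hadef]; push_cast; ring
    have h3 : 4/ε < a := by rw [h2]; linarith
    have := (div_lt_iff₀ hε).mp h3
    linarith
  have hTε : 1/(T:ℝ) < ε/2 := by
    rw [div_lt_div_iff₀ hTR (by norm_num)]
    have h1 : 2/ε ≤ (⌈2/ε⌉₊ : ℝ) := Nat.le_ceil _
    have h2 : (T:ℝ) = (⌈2/ε⌉₊:ℝ) + 1 := by rw [hTdef]; push_cast; ring
    have h3 : 2/ε < T := by rw [h2]; linarith
    have := (div_lt_iff₀ hε).mp h3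
    linarith
  refine ⟨3^a * T, fun k hk => ?_⟩
  have hpos : 0 < 3^a * T := Nat.mul_pos (Nat.pow_pos (n := a) (by norm_num)) hT
  have hk0 : 0 < k := by omega
  have hkT : 3^a * T ≤ 2*k := by omega
  have hge := NC.lambda_ge ha hT hkT
  have hle := NC.lambda_le_one hk0
  rw [Real.dist_eq, abs_lt]
  have h2a : 0 ≤ 2/(a:ℝ) := by positivity
  have h1T : 0 ≤ 1/(T:ℝ) := by positivity
  constructor
  · nlinarith [hge]
  · linarith
end

section
/- λ_k ≤ λ_{k+1} for all k ≥ 1: the asymptotic expected unmatched fraction is nondecreasing in the number of generator pairs k. -/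
open scoped BigOperators

section Aux

lemma exists_opt {k : ℕ} (X : List (Letter k)) :
    ∃ M : Finset (ℕ × ℕ), IsNCMatching X M ∧ ell X = X.length - 2 * M.card :=
  Nat.sInf_mem (ell_set_nonempty X)

lemma two_mul_card_le {k : ℕ} (X : List (Letter k)) (M : Finset (ℕ × ℕ))
    (h : IsNCMatching X M) : 2 * M.card ≤ X.length := by
  classical
  have hinj : Set.InjOn (fun pb : (ℕ × ℕ) × Bool => if pb.2 then pb.1.1 else pb.1.2)
      ↑(M ×ˢ (Finset.univ : Finset Bool)) := by
    rintro ⟨p, b⟩ hp ⟨q, c⟩ hq heq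
    simp only [Finset.coe_product, Set.mem_prod, Finset.mem_coe] at hp hq
    by_cases hpq : p = q
    · subst hpq
      rcases (h.1 p hp.1) with ⟨h1, _, _⟩
      cases b <;> cases c <;> simp_all <;> omega
    · rcases h.2.1 p hp.1 q hq.1 hpq with ⟨a1, a2, a3, a4⟩
      cases b <;> cases c <;> simp_all
  have hmaps : ∀ pb ∈ M ×ˢ (Finset.univ : Finset Bool),
      (if pb.2 then pb.1.1 else pb.1.2) ∈ Finset.range X.length := by
    rintro ⟨p, b⟩ hp
    rw [Finset.mem_product] at hp
    rcases h.1 p hp.1 with ⟨h1, h2, _⟩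
    cases b <;> simp <;> omega
  have := Finset.card_le_card_of_injOn _ hmaps hinj
  simpa [Finset.card_product, mul_comm] using this

lemma bar_map {k1 k2 : ℕ} (g : Fin k1 → Fin k2) (x : Letter k1) :
    Letter.bar (Prod.map g id x) = Prod.map g id (Letter.bar x) := rfl

lemma isNC_map_iff {k1 k2 : ℕ} (g : Fin k1 → Fin k2) (hg : Function.Injective g)
    (X : List (Letter k1)) (M : Finset (ℕ × ℕ)) :
    IsNCMatching (X.map (Prod.map g id)) M ↔ IsNCMatching X M := by
  have hφ : Function.Injective (Prod.map g (id : Bool → Bool)) :=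
    Function.Injective.prodMap hg (fun a b h => h)
  have hcomm : (Prod.map g (id : Bool → Bool)) ∘ Letter.bar = Letter.bar ∘ (Prod.map g id) := rfl
  unfold IsNCMatching
  simp only [List.length_map]
  constructor
  · rintro ⟨h1, h2, h3⟩
    refine ⟨fun p hp => ?_, h2, h3⟩
    rcases h1 p hp with ⟨a, b, c⟩
    refine ⟨a, b, ?_⟩
    rw [List.getElem?_map, List.getElem?_map] at c
    apply Option.map_injective hφ
    rw [c, Option.map_map, Option.map_map, hcomm]
  · rintro ⟨h1, h2, h3⟩
    refine ⟨fun p hp => ?_, h2, h3⟩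
    rcases h1 p hp with ⟨a, b, c⟩
    refine ⟨a, b, ?_⟩
    rw [List.getElem?_map, List.getElem?_map, c, Option.map_map, Option.map_map, hcomm]

lemma ell_map_eq {k1 k2 : ℕ} (g : Fin k1 → Fin k2) (hg : Function.Injective g)
    (X : List (Letter k1)) : ell (X.map (Prod.map g id)) = ell X := by
  unfold ell
  congr 1
  ext m
  simp only [Set.mem_setOf_eq, List.length_map]
  constructor
  · rintro ⟨M, hM, rfl⟩; exact ⟨M, (isNC_map_iff g hg X M).1 hM, rfl⟩
  · rintro ⟨M, hM, rfl⟩; exact ⟨M, (isNC_map_iff g hg X M).2 hM, rfl⟩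


section FilterGet


variable {α : Type*} (P : α → Bool)

lemma filter_get : ∀ (X : List α) (p : ℕ) (h : p < X.length), P X[p] = true →
    (X.take p).countP P < (X.filter P).length ∧
      (X.filter P)[(X.take p).countP P]? = X[p]? := by
  intro X
  induction X with
  | nil => intro p h; simp at h
  | cons a t ih =>
    intro p h hP
    cases p with
    | zero =>
      simp only [List.getElem_cons_zero] at hP
      simp [List.filter_cons, hP]
    | succ p =>
      simp only [List.getElem_cons_succ] at hP
      have h' : p < t.length := by simpa using h
      rcases ih p h' hP with ⟨ih1, ih2⟩
      by_cases ha : P a = true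
      · constructor
        · simp only [List.filter_cons, ha, if_true, List.length_cons,
            List.take_succ_cons, List.countP_cons, ha]
          omega
        · simp only [List.filter_cons, ha, if_true, List.take_succ_cons,
            List.countP_cons, ha, List.getElem?_cons_succ]
          simpa using ih2
      · have ha' : P a = false := by simpa using ha
        constructor
        · simpa [List.filter_cons, ha', List.take_succ_cons, List.countP_cons] using ih1
        · simpa [List.filter_cons, ha', List.take_succ_cons, List.countP_cons] using ih2

lemma countP_take_mono (X : List α) {p q : ℕ} (hpq : p ≤ q) :
    (X.take p).countP P ≤ (X.take q).countP P := by
  have hs : List.Sublist (X.take p) (X.take q) := by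
    have := List.take_sublist p (X.take q)
    rwa [List.take_take, min_eq_left hpq] at this
  exact hs.countP_le

lemma countP_take_lt (X : List α) {p q : ℕ} (hpq : p < q) (hp : p < X.length)
    (hP : P X[p] = true) : (X.take p).countP P < (X.take q).countP P := by
  have h1 : (X.take (p+1)).countP P = (X.take p).countP P + 1 := by
    rw [List.take_succ, List.countP_append]
    have hx : X[p]? = some X[p] := List.getElem?_eq_getElem hp
    simp [hx, hP]
  have h2 : (X.take (p+1)).countP P ≤ (X.take q).countP P :=
    countP_take_mono P X (Nat.succ_le_of_lt hpq)
  omega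

end FilterGet

/-- sum over all classes of the count of letters avoiding that class -/
lemma sum_countP_ne (X : List (Letter (k+1))) :
    ∑ i : Fin (k+1), X.countP (fun a => decide (a.1 ≠ i)) = k * X.length := by
  induction X with
  | nil => simp
  | cons a t ih =>
    simp only [List.countP_cons, Finset.sum_add_distrib, ih, List.length_cons]
    have : ∑ i : Fin (k+1), (if (decide (a.1 ≠ i)) = true then 1 else 0) = k := by
      have h1 : ∀ i : Fin (k+1), (if (decide (a.1 ≠ i)) = true then (1:ℕ) else 0)
          = if a.1 ≠ i then 1 else 0 := by intro i; by_cases h : a.1 = i <;> simp [h]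
      simp only [h1]
      rw [← Finset.card_filter]
      have : (Finset.univ.filter (fun i : Fin (k+1) => a.1 ≠ i)) = Finset.univ.erase a.1 := by
        ext i; simp [eq_comm, Finset.mem_erase, ne_comm]
      rw [this, Finset.card_erase_of_mem (Finset.mem_univ _)]
      simp
    rw [this]
    ring


lemma sum_filter_ell (X : List (Letter (k+1))) :
    ∑ i : Fin (k+1), ell (X.filter (fun a => decide (a.1 ≠ i))) ≤ k * ell X := by
  classical
  obtain ⟨M, hM, hopt⟩ := exists_opt X
  set n' := X.length with hn'
  have hB : 2 * M.card ≤ n' := two_mul_card_le X M hM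
  set cl : ℕ → Fin (k+1) := fun t => (X.getD t default).1 with hcl
  have hget : ∀ t, ∀ h : t < n', X.getD t default = X[t]'h := by
    intro t h
    exact List.getD_eq_getElem X default h
  have hsome : ∀ t, t < n' → X[t]? = some (X.getD t default) := by
    intro t h
    rw [List.getElem?_eq_getElem h, hget t h]
  have hclM : ∀ p ∈ M, cl p.1 = cl p.2 := by
    intro p pm
    obtain ⟨h1, h2, h3⟩ := hM.1 p pm
    have e2 := hsome p.2 h2
    have e1 := hsome p.1 (h1.trans h2)
    rw [e1, e2] at h3
    simp only [Option.map_some] at h3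
    have : X.getD p.1 default = Letter.bar (X.getD p.2 default) := by
      exact Option.some_injective _ h3
    show (X.getD p.1 default).1 = (X.getD p.2 default).1
    rw [this]
    rfl
  -- main per-class bound
  have Hi : ∀ i : Fin (k+1),
      ell (X.filter (fun a => decide (a.1 ≠ i)))
        + 2 * ((M.filter (fun p => cl p.2 ≠ i)).card)
      ≤ X.countP (fun a => decide (a.1 ≠ i)) := by
    intro i
    set P : Letter (k+1) → Bool := fun a => decide (a.1 ≠ i) with hP
    set Y := X.filter P with hY
    set c : ℕ → ℕ := fun t => (X.take t).countP P with hc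
    have hPt : ∀ t, ∀ h : t < n', cl t ≠ i → P (X[t]'h) = true := by
      intro t h hclt
      simp only [hP, decide_eq_true_eq]
      rw [← hget t h]
      exact hclt
    have cne : ∀ x y, x < n' → y < n' → cl x ≠ i → cl y ≠ i → x ≠ y → c x ≠ c y := by
      intro x y hx hy px py hxy
      rcases lt_or_gt_of_ne hxy with h | h
      · exact ne_of_lt (countP_take_lt P X h hx (hPt x hx px))
      · exact ne_of_gt (countP_take_lt P X h hy (hPt y hy py))
    have cmono : ∀ x y, c x < c y → x < y := by
      intro x y hxy
      by_contra hcon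
      push_neg at hcon
      exact absurd (countP_take_mono P X hcon) (not_le.mpr hxy)
    -- facts for kept pairs
    have pker : ∀ p ∈ M.filter (fun p => cl p.2 ≠ i),
        p ∈ M ∧ p.1 < p.2 ∧ p.2 < n' ∧ p.1 < n' ∧ cl p.1 ≠ i ∧ cl p.2 ≠ i := by
      intro p hp
      rw [Finset.mem_filter] at hp
      obtain ⟨pm, pcl⟩ := hp
      obtain ⟨h1, h2, _⟩ := hM.1 p pm
      exact ⟨pm, h1, h2, h1.trans h2, (hclM p pm) ▸ pcl, pcl⟩
    set Mi : Finset (ℕ × ℕ) :=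
      (M.filter (fun p => cl p.2 ≠ i)).image (fun p => (c p.1, c p.2)) with hMi
    have hNC : IsNCMatching Y Mi := by
      refine ⟨?_, ?_, ?_⟩
      · rintro r hr
        rw [hMi, Finset.mem_image] at hr
        obtain ⟨p, hp, rfl⟩ := hr
        obtain ⟨pm, h1, h2, h1', k1, k2⟩ := pker p hp
        obtain ⟨g2len, g2get⟩ := filter_get P X p.2 h2 (hPt p.2 h2 k2)
        obtain ⟨g1len, g1get⟩ := filter_get P X p.1 h1' (hPt p.1 h1' k1)
        refine ⟨countP_take_lt P X h1 h1' (hPt p.1 h1' k1), g2len, ?_⟩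
        rw [g1get, g2get]
        exact (hM.1 p pm).2.2
      · rintro r hr s hs hrs
        rw [hMi, Finset.mem_image] at hr hs
        obtain ⟨p, hp, rfl⟩ := hr
        obtain ⟨q, hq, rfl⟩ := hs
        obtain ⟨pm, h1, h2, h1', k1, k2⟩ := pker p hp
        obtain ⟨pm', j1, j2, j1', l1, l2⟩ := pker q hq
        have hpq : p ≠ q := by rintro rfl; exact hrs rfl
        obtain ⟨n1, n2, n3, n4⟩ := hM.2.1 p pm q pm' hpq
        exact ⟨cne _ _ h1' j1' k1 l1 n1, cne _ _ h1' j2 k1 l2 n2,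
          cne _ _ h2 j1' k2 l1 n3, cne _ _ h2 j2 k2 l2 n4⟩
      · rintro r hr s hs ⟨w1, w2, w3⟩
        rw [hMi, Finset.mem_image] at hr hs
        obtain ⟨p, hp, rfl⟩ := hr
        obtain ⟨q, hq, rfl⟩ := hs
        obtain ⟨pm, _, _, _, _, _⟩ := pker p hp
        obtain ⟨pm', _, _, _, _, _⟩ := pker q hq
        exact hM.2.2 p pm q pm' ⟨cmono _ _ w1, cmono _ _ w2, cmono _ _ w3⟩
    have hcard : Mi.card = (M.filter (fun p => cl p.2 ≠ i)).card := by
      rw [hMi]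
      apply Finset.card_image_of_injOn
      intro p hp q hq heq
      simp only [Finset.mem_coe] at hp hq
      obtain ⟨pm, h1, h2, h1', k1, k2⟩ := pker p hp
      obtain ⟨pm', j1, j2, j1', l1, l2⟩ := pker q hq
      by_contra hpq
      obtain ⟨n1, _, _, _⟩ := hM.2.1 p pm q pm' hpq
      have : c p.1 ≠ c q.1 := cne _ _ h1' j1' k1 l1 n1
      exact this (congrArg Prod.fst heq)
    have hYlen : X.countP P = Y.length := by
      rw [hY, List.countP_eq_length_filter]
    have e1 : ell Y ≤ Y.length - 2 * Mi.card := ell_le Y Mi hNC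
    have e2 : 2 * Mi.card ≤ Y.length := two_mul_card_le Y Mi hNC
    rw [hcard] at e1 e2
    rw [hYlen]
    omega
  -- sum it up
  have hsum := Finset.sum_le_sum (fun i (_ : i ∈ Finset.univ) => Hi i)
  rw [sum_countP_ne X, Finset.sum_add_distrib] at hsum
  have hfib : ∑ i : Fin (k+1), (M.filter (fun p => cl p.2 = i)).card = M.card :=
    (Finset.card_eq_sum_card_fiberwise (fun p _ => Finset.mem_univ (cl p.2))).symm
  have hsplit : ∀ i : Fin (k+1), (M.filter (fun p => cl p.2 = i)).card
      + (M.filter (fun p => cl p.2 ≠ i)).card = M.card := by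
    intro i
    exact Finset.card_filter_add_card_filter_not (fun p : ℕ × ℕ => cl p.2 = i)
  have hd : ∑ i : Fin (k+1), (M.filter (fun p => cl p.2 ≠ i)).card = k * M.card := by
    have := Finset.sum_congr rfl (fun i (_ : i ∈ (Finset.univ : Finset (Fin (k+1)))) =>
      (hsplit i))
    rw [Finset.sum_add_distrib, hfib] at this
    simp only [Finset.sum_const, Finset.card_univ, Fintype.card_fin, smul_eq_mul] at this
    have h2 : (k+1) * M.card = k * M.card + M.card := by ring
    omega
  rw [← Finset.mul_sum, hd] at hsum
  -- final arithmetic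
  obtain ⟨t, ht⟩ : ∃ t, n' = t + 2 * M.card := ⟨n' - 2 * M.card, by omega⟩
  have hellX : ell X = t := by omega
  rw [hellX]
  have hkn : k * n' = k * t + 2 * (k * M.card) := by rw [ht]; ring
  rw [hn'] at hkn
  rw [hkn] at hsum
  omega

lemma sum_fin_succ_fun {A : Type*} [Fintype A] [DecidableEq A] (n : ℕ) (F : (Fin (n+1) → A) → ℝ) :
    ∑ w : Fin (n+1) → A, F w = ∑ a : A, ∑ w : Fin n → A, F (Fin.cons a w) := by
  rw [← Finset.sum_product', Finset.univ_product_univ]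
  exact (Fintype.sum_equiv (Fin.consEquiv (fun _ : Fin (n+1) => A)) _ _ (fun x => rfl)).symm

lemma filter_sum {A : Type*} [Fintype A] [DecidableEq A] (P : A → Bool) :
    ∀ (n : ℕ) (f : List A → ℝ),
      ∑ w : Fin n → A, f ((List.ofFn w).filter P) =
        ∑ m ∈ Finset.range (n+1), (n.choose m : ℝ) *
          (Fintype.card {a : A // P a = false} : ℝ) ^ (n - m) *
          ∑ v : Fin m → {a : A // P a = true}, f (List.ofFn (fun j => (v j).1)) := by
  intro n
  induction n with
  | zero =>
    intro f
    simp
  | succ n ih =>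
    intro f
    set D : ℝ := (Fintype.card {a : A // P a = false} : ℝ) with hD
    have hsplit : ∑ w : Fin (n+1) → A, f ((List.ofFn w).filter P) =
        ∑ a : A, ∑ w : Fin n → A, f ((a :: List.ofFn w).filter P) := by
      rw [sum_fin_succ_fun n (fun w => f ((List.ofFn w).filter P))]
      congr 1
      ext a
      congr 1
      ext w
      rw [List.ofFn_succ]
      simp [Fin.cons]
    rw [hsplit]
    -- split the outer sum into P-true and P-false letters
    have hsplit2 : ∑ a : A, ∑ w : Fin n → A, f ((a :: List.ofFn w).filter P) =
        (∑ a : {a : A // P a = true}, ∑ w : Fin n → A, f (a.1 :: (List.ofFn w).filter P))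
        + D * ∑ w : Fin n → A, f ((List.ofFn w).filter P) := by
      rw [← Fintype.sum_subtype_add_sum_subtype (fun a => P a = true)
        (fun a => ∑ w : Fin n → A, f ((a :: List.ofFn w).filter P))]
      congr 1
      · apply Finset.sum_congr rfl
        intro a _
        apply Finset.sum_congr rfl
        intro w _
        rw [List.filter_cons, if_pos a.2]
      · have hc : ∀ a : {x : A // ¬ P x = true},
            (∑ w : Fin n → A, f ((a.1 :: List.ofFn w).filter P))
              = ∑ w : Fin n → A, f ((List.ofFn w).filter P) := by
          intro a
          apply Finset.sum_congr rfl
          intro w _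
          rw [List.filter_cons, if_neg a.2]
        rw [Finset.sum_congr rfl (fun a _ => hc a), Finset.sum_const, Finset.card_univ]
        have hcc : Fintype.card {x : A // ¬ P x = true} = Fintype.card {a : A // P a = false} := by
          apply Fintype.card_congr
          apply Equiv.subtypeEquivRight
          intro x; simp
        rw [hcc, nsmul_eq_mul, hD]
    rw [hsplit2]
    set S : ℕ → ℝ := fun m => ∑ v : Fin m → {a : A // P a = true},
      f (List.ofFn (fun j => (v j).1)) with hS
    have key1 : (∑ a : {a : A // P a = true}, ∑ w : Fin n → A, f (a.1 :: (List.ofFn w).filter P))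
        = ∑ m ∈ Finset.range (n+1), (n.choose m : ℝ) * D ^ (n - m) * S (m+1) := by
      rw [Finset.sum_congr rfl (fun (a : {a : A // P a = true}) _ => ih (fun l => f (a.1 :: l)))]
      rw [Finset.sum_comm]
      apply Finset.sum_congr rfl
      intro m _
      rw [← Finset.mul_sum]
      congr 1
      have e := sum_fin_succ_fun m (fun v : Fin (m+1) → {a : A // P a = true} =>
        f (List.ofFn (fun j => (v j).1)))
      simp only [hS]
      rw [e]
      apply Finset.sum_congr rfl
      intro a _
      apply Finset.sum_congr rfl
      intro v _
      rw [List.ofFn_succ]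
      simp
    rw [key1, ih f]
    -- now pure `Finset.range` algebra
    have hzero : ((n+1).choose 0 : ℝ) * D ^ (n+1-0) * S 0 = D ^ (n+1) * S 0 := by
      simp
    rw [Finset.sum_range_succ' (fun m => ((n+1).choose m : ℝ) * D ^ (n+1-m) * S m) (n+1)]
    have hterm : ∀ i, (((n+1).choose (i+1) : ℕ) : ℝ) * D ^ (n+1-(i+1)) * S (i+1)
        = (n.choose i : ℝ) * D ^ (n-i) * S (i+1) + (n.choose (i+1) : ℝ) * D ^ (n-i) * S (i+1) := by
      intro i
      have hss : n+1-(i+1) = n - i := Nat.succ_sub_succ n i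
      rw [hss, Nat.choose_succ_succ']
      push_cast
      ring
    rw [Finset.sum_congr rfl (fun i _ => hterm i), Finset.sum_add_distrib]
    have hsecond : ∑ i ∈ Finset.range (n+1), (n.choose (i+1) : ℝ) * D ^ (n-i) * S (i+1)
        = D * ∑ m ∈ Finset.range (n+1), (n.choose m : ℝ) * D ^ (n-m) * S m - D ^ (n+1) * S 0 := by
      have e1 : ∑ m ∈ Finset.range (n+2), (n.choose m : ℝ) * D ^ (n+1-m) * S m
          = (∑ i ∈ Finset.range (n+1), (n.choose (i+1) : ℝ) * D ^ (n+1-(i+1)) * S (i+1))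
            + (n.choose 0 : ℝ) * D ^ (n+1) * S 0 :=
        Finset.sum_range_succ' (fun m => (n.choose m : ℝ) * D ^ (n+1-m) * S m) (n+1)
      have e2 : ∑ m ∈ Finset.range (n+2), (n.choose m : ℝ) * D ^ (n+1-m) * S m
          = ∑ m ∈ Finset.range (n+1), (n.choose m : ℝ) * D ^ (n+1-m) * S m := by
        rw [Finset.sum_range_succ]
        simp [Nat.choose_succ_self]
      have e3 : ∑ m ∈ Finset.range (n+1), (n.choose m : ℝ) * D ^ (n+1-m) * S m
          = D * ∑ m ∈ Finset.range (n+1), (n.choose m : ℝ) * D ^ (n-m) * S m := by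
        rw [Finset.mul_sum]
        apply Finset.sum_congr rfl
        intro m hm
        rw [Finset.mem_range] at hm
        have : n + 1 - m = (n - m) + 1 := by omega
        rw [this, pow_succ]
        ring
      have e4 : ∀ i, (n.choose (i+1) : ℝ) * D ^ (n+1-(i+1)) * S (i+1)
          = (n.choose (i+1) : ℝ) * D ^ (n-i) * S (i+1) := by
        intro i
        rw [Nat.succ_sub_succ]
      rw [Finset.sum_congr rfl (fun i _ => e4 i)] at e1
      rw [e2, e3] at e1
      simp only [Nat.choose_zero_right, Nat.cast_one, one_mul] at e1
      linarith
    rw [hsecond, hzero]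
    ring

lemma binom_deriv (x y : ℝ) (n : ℕ) :
    ∑ m ∈ Finset.range (n+1), (m : ℝ) * (n.choose m : ℝ) * x ^ m * y ^ (n - m)
      = n * x * (x + y) ^ (n - 1) := by
  cases n with
  | zero => simp
  | succ N =>
    rw [Finset.sum_range_succ' (fun m => (m : ℝ) * ((N+1).choose m : ℝ) * x ^ m * y ^ (N+1-m))
      (N+1)]
    simp only [Nat.cast_zero, zero_mul, add_zero, Nat.cast_add, Nat.cast_one]
    have hterm : ∀ i : ℕ, ((i:ℝ)+1) * (((N+1).choose (i+1) : ℕ) : ℝ) * x ^ (i+1) * y ^ (N+1-(i+1))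
        = ((N:ℝ)+1) * x * ((N.choose i : ℝ) * x ^ i * y ^ (N - i)) := by
      intro i
      have hc : (N+1) * N.choose i = (N+1).choose (i+1) * (i+1) := by
        exact_mod_cast Nat.add_one_mul_choose_eq N i
      have hc' : ((N:ℝ)+1) * (N.choose i : ℝ) = ((N+1).choose (i+1) : ℝ) * ((i:ℝ)+1) := by
        exact_mod_cast congrArg (Nat.cast : ℕ → ℝ) hc
      have hss : N+1-(i+1) = N - i := Nat.succ_sub_succ N i
      rw [hss]
      push_cast
      linear_combination (-(x ^ (i+1) * y ^ (N - i))) * hc'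
    rw [Finset.sum_congr rfl (fun i _ => hterm i), ← Finset.mul_sum]
    have hap : ∑ i ∈ Finset.range (N+1), ((N.choose i : ℝ) * x ^ i * y ^ (N - i)) = (x+y)^N := by
      rw [add_pow]
      apply Finset.sum_congr rfl
      intro i _
      ring
    rw [hap]
    have h11 : N + 1 - 1 = N := rfl
    rw [h11]

section Assemble

lemma Lk_nonneg (k n : ℕ) : 0 ≤ Lk k n := by
  unfold Lk
  apply div_nonneg
  · exact Finset.sum_nonneg (fun w _ => Nat.cast_nonneg _)
  · positivity

lemma lambda_le_Lk (k : ℕ) (n : ℕ+) : lambda k ≤ Lk k n / n := by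
  apply ciInf_le
  refine ⟨0, ?_⟩
  rintro x ⟨m, rfl⟩
  exact div_nonneg (Lk_nonneg k m) (by positivity)

lemma ell_nil {k : ℕ} : ell (([] : List (Letter k))) = 0 := by
  have := ell_le ([] : List (Letter k)) ∅ (isNC_empty _)
  simpa using this

lemma mul_lambda_le_Lk (k : ℕ) (m : ℕ) : (m : ℝ) * lambda k ≤ Lk k m := by
  cases m with
  | zero =>
    simp only [Nat.cast_zero, zero_mul]
    exact Lk_nonneg k 0
  | succ m =>
    have h := lambda_le_Lk k ⟨m+1, Nat.succ_pos m⟩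
    replace h := (le_div_iff₀ (by positivity : (0:ℝ) < (((⟨m+1, Nat.succ_pos m⟩ : ℕ+) : ℕ) : ℝ))).mp h
    calc ((m+1 : ℕ) : ℝ) * lambda k = lambda k * ((⟨m+1, Nat.succ_pos m⟩ : ℕ+) : ℕ) := by
          push_cast; ring
      _ ≤ Lk k (m+1) := h

-- the subtype sum equals the plain sum over Letter k words
lemma subtype_sum_eq (k : ℕ) (i : Fin (k+1)) (m : ℕ) :
    ∑ v : Fin m → {a : Letter (k+1) // (fun a : Letter (k+1) => decide (a.1 ≠ i)) a = true},
      (ell (List.ofFn (fun j => (v j).1)) : ℝ)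
    = ∑ u : Fin m → Letter k, (ell (List.ofFn u) : ℝ) := by
  set B := {a : Letter (k+1) // (fun a : Letter (k+1) => decide (a.1 ≠ i)) a = true}
  have hφ : ∀ x : Letter k, decide (((Prod.map i.succAbove (id : Bool → Bool)) x).1 ≠ i) = true := by
    intro x
    simp [Prod.map, Fin.succAbove_ne]
  set h : (Fin m → Letter k) → (Fin m → B) := fun u j => ⟨Prod.map i.succAbove id (u j), hφ (u j)⟩
    with hh
  have hbij : Function.Bijective h := by
    constructor
    · intro u u' he
      funext j
      have := congrFun he j
      have h2 := congrArg Subtype.val this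
      simp only [hh, Prod.map, Prod.mk.injEq] at h2
      exact Prod.ext (Fin.succAbove_right_injective h2.1) h2.2
    · intro v
      have hex : ∀ j, ∃ c : Letter k, Prod.map i.succAbove (id : Bool → Bool) c = (v j).1 := by
        intro j
        have hne : (v j).1.1 ≠ i := by
          have := (v j).2
          simpa using this
        obtain ⟨c, hc⟩ := Fin.exists_succAbove_eq hne
        exact ⟨(c, (v j).1.2), by simp [Prod.map, hc]⟩
      choose u hu using hex
      refine ⟨u, ?_⟩
      funext j
      exact Subtype.ext (hu j)
  rw [← Function.Bijective.sum_comp hbij (fun v => (ell (List.ofFn (fun j => (v j).1)) : ℝ))]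
  apply Finset.sum_congr rfl
  intro u _
  congr 1
  have : List.ofFn (fun j => ((h u) j).1) = (List.ofFn u).map (Prod.map i.succAbove id) := by
    rw [List.map_ofFn]
    rfl
  rw [this, ell_map_eq i.succAbove (Fin.succAbove_right_injective) (List.ofFn u)]

lemma card_false (k : ℕ) (i : Fin (k+1)) :
    Fintype.card {a : Letter (k+1) // (fun a : Letter (k+1) => decide (a.1 ≠ i)) a = false} = 2 := by
  have e : {a : Letter (k+1) // (fun a : Letter (k+1) => decide (a.1 ≠ i)) a = false} ≃ Bool :=
    { toFun := fun a => a.1.2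
      invFun := fun s => ⟨(i, s), by simp⟩
      left_inv := by
        rintro ⟨⟨c, s⟩, hc⟩
        have : c = i := by simpa using hc
        subst this
        rfl
      right_inv := fun s => rfl }
  rw [Fintype.card_congr e, Fintype.card_bool]

end Assemble

/-- `λ_k` is nondecreasing in `k`. -/
theorem lambda_monotone (k : ℕ) (hk : 1 ≤ k) : lambda k ≤ lambda (k + 1) := by
  apply le_ciInf
  intro n
  rw [le_div_iff₀ (by positivity : (0:ℝ) < ((n : ℕ) : ℝ))]
  set N := (n : ℕ) with hN
  have hN1 : 1 ≤ N := n.2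
  have hkR : (1:ℝ) ≤ (k:ℝ) := by exact_mod_cast hk
  -- step 1: pointwise inequality summed over words
  have step1 : ∑ w : Fin N → Letter (k+1), ∑ i : Fin (k+1),
        (ell ((List.ofFn w).filter (fun a => decide (a.1 ≠ i))) : ℝ)
      ≤ (k : ℝ) * ((2 * (k+1) : ℝ) ^ N * Lk (k+1) N) := by
    have h1 : ∀ w : Fin N → Letter (k+1), ∑ i : Fin (k+1),
        (ell ((List.ofFn w).filter (fun a => decide (a.1 ≠ i))) : ℝ)
        ≤ (k : ℝ) * (ell (List.ofFn w) : ℝ) := by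
      intro w
      have := sum_filter_ell (List.ofFn w)
      exact_mod_cast (by exact_mod_cast Nat.cast_le.mpr this : _)
    calc _ ≤ ∑ w : Fin N → Letter (k+1), (k : ℝ) * (ell (List.ofFn w) : ℝ) :=
          Finset.sum_le_sum (fun w _ => h1 w)
      _ = (k : ℝ) * ∑ w : Fin N → Letter (k+1), (ell (List.ofFn w) : ℝ) := by
          rw [Finset.mul_sum]
      _ = (k : ℝ) * ((2 * (k+1) : ℝ) ^ N * Lk (k+1) N) := by
          rw [Lk]
          have hpow : ((2 * ((k:ℕ)+1) : ℝ)) ^ N ≠ 0 := by positivity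
          field_simp
          push_cast; ring
  -- step 2: rewrite the left side via the distributional identity
  have Ssum : ∀ m : ℕ, ∑ u : Fin m → Letter k, (ell (List.ofFn u) : ℝ)
      = (2*(k:ℝ))^m * Lk k m := by
    intro m
    rw [Lk]
    field_simp
  have inner : ∀ i : Fin (k+1),
      ∑ w : Fin N → Letter (k+1), (ell ((List.ofFn w).filter (fun a => decide (a.1 ≠ i))) : ℝ)
      = ∑ m ∈ Finset.range (N+1), (N.choose m : ℝ) * 2 ^ (N-m) * ((2*(k:ℝ))^m * Lk k m) := by
    intro i
    rw [filter_sum (fun a : Letter (k+1) => decide (a.1 ≠ i)) N (fun l => (ell l : ℝ))]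
    apply Finset.sum_congr rfl
    intro m _
    rw [card_false k i, subtype_sum_eq k i m, Ssum m]
    norm_num
  have step2 : ∑ w : Fin N → Letter (k+1), ∑ i : Fin (k+1),
        (ell ((List.ofFn w).filter (fun a => decide (a.1 ≠ i))) : ℝ)
      = ((k:ℝ)+1) * ∑ m ∈ Finset.range (N+1),
          (N.choose m : ℝ) * 2 ^ (N-m) * ((2*(k:ℝ))^m * Lk k m) := by
    rw [Finset.sum_comm]
    rw [Finset.sum_congr rfl (fun i _ => inner i), Finset.sum_const, Finset.card_univ,
      Fintype.card_fin, nsmul_eq_mul]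
    push_cast
    ring
  -- step 3: lower bound each Lk k m by m * lambda k
  have step3 : ∑ m ∈ Finset.range (N+1),
        (N.choose m : ℝ) * 2 ^ (N-m) * ((2*(k:ℝ))^m * ((m:ℝ) * lambda k))
      ≤ ∑ m ∈ Finset.range (N+1),
        (N.choose m : ℝ) * 2 ^ (N-m) * ((2*(k:ℝ))^m * Lk k m) := by
    apply Finset.sum_le_sum
    intro m _
    apply mul_le_mul_of_nonneg_left
    · exact mul_le_mul_of_nonneg_left (mul_lambda_le_Lk k m) (by positivity)
    · positivity
  -- step 4: evaluate the lower bound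
  have step4 : ∑ m ∈ Finset.range (N+1),
        (N.choose m : ℝ) * 2 ^ (N-m) * ((2*(k:ℝ))^m * ((m:ℝ) * lambda k))
      = lambda k * ((N:ℝ) * (2*(k:ℝ)) * (2*(k:ℝ)+2) ^ (N-1)) := by
    rw [← binom_deriv (2*(k:ℝ)) 2 N, Finset.mul_sum]
    apply Finset.sum_congr rfl
    intro m _
    ring
  -- combine
  have hcomb : ((k:ℝ)+1) * (lambda k * ((N:ℝ) * (2*(k:ℝ)) * (2*(k:ℝ)+2) ^ (N-1)))
      ≤ (k : ℝ) * ((2 * ((k:ℝ)+1)) ^ N * Lk (k+1) N) := by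
    calc ((k:ℝ)+1) * (lambda k * ((N:ℝ) * (2*(k:ℝ)) * (2*(k:ℝ)+2) ^ (N-1)))
        = ((k:ℝ)+1) * ∑ m ∈ Finset.range (N+1),
            (N.choose m : ℝ) * 2 ^ (N-m) * ((2*(k:ℝ))^m * ((m:ℝ) * lambda k)) := by rw [step4]
      _ ≤ ((k:ℝ)+1) * ∑ m ∈ Finset.range (N+1),
            (N.choose m : ℝ) * 2 ^ (N-m) * ((2*(k:ℝ))^m * Lk k m) :=
          mul_le_mul_of_nonneg_left step3 (by positivity)
      _ = ∑ w : Fin N → Letter (k+1), ∑ i : Fin (k+1),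
            (ell ((List.ofFn w).filter (fun a => decide (a.1 ≠ i))) : ℝ) := step2.symm
      _ ≤ (k : ℝ) * ((2 * ((k:ℝ)+1)) ^ N * Lk (k+1) N) := step1
  -- final arithmetic
  have hppos : (0:ℝ) < (2*(k:ℝ)+2) ^ N := by positivity
  have hNe : (2*(k:ℝ)+2) ^ (N-1) * (2*(k:ℝ)+2) = (2*(k:ℝ)+2) ^ N := by
    rw [← pow_succ]
    congr 1
    omega
  have hfin : ((k:ℝ) * (2*(k:ℝ)+2) ^ N) * (lambda k * (N:ℝ))
      ≤ ((k:ℝ) * (2*(k:ℝ)+2) ^ N) * Lk (k+1) N := by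
    calc ((k:ℝ) * (2*(k:ℝ)+2) ^ N) * (lambda k * (N:ℝ))
        = ((k:ℝ)+1) * (lambda k * ((N:ℝ) * (2*(k:ℝ)) * (2*(k:ℝ)+2) ^ (N-1))) := by
          rw [← hNe]; ring
      _ ≤ (k : ℝ) * ((2 * ((k:ℝ)+1)) ^ N * Lk (k+1) N) := hcomb
      _ = ((k:ℝ) * (2*(k:ℝ)+2) ^ N) * Lk (k+1) N := by ring_nf
  have := le_of_mul_le_mul_left (by
      calc ((k:ℝ) * (2*(k:ℝ)+2) ^ N) * (lambda k * (N:ℝ))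
          ≤ ((k:ℝ) * (2*(k:ℝ)+2) ^ N) * Lk (k+1) N := hfin) (by positivity)
  exact this

end Aux
end
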